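/- arXiv:2207.12479 — 11 statements merged into one kernel-verified Lean document; each statement's English description precedes it below -/
import Mathlib

section
/- Under the positivity, randomization and modularity assumptions, the experimental (target-trial) law factorizes according to the g-formula with randomized assignment: for all y, t, x, P_E(Y=y, T=t, X=x) = P_O(Y=y | T=t, X=x) · P_E(T=t) · P_O(X=x), where for x with P_O(X=x)=0 both sides are zero. -/
/-!
Discrete target-trial setup: `P_O` and `P_E` are probability mass functions on
`𝒴 × Bool × 𝒳` (outcome `Y`, binary treatment `T`, covariate `X`).
STATEMENT 0: Under positivity, randomization and modularity, the experimental law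
factorizes according to the g-formula with randomized assignment.
-/

open scoped BigOperators

noncomputable section

variable {𝒴 𝒳 : Type*} [Countable 𝒴] [Countable 𝒳]

/-- Marginal mass of `X = x`. -/
def margX (P : 𝒴 × Bool × 𝒳 → ℝ) (x : 𝒳) : ℝ :=
  ∑' y : 𝒴, ∑' t : Bool, P (y, t, x)

/-- Marginal mass of `T = t`. -/
def margT (P : 𝒴 × Bool × 𝒳 → ℝ) (t : Bool) : ℝ :=
  ∑' y : 𝒴, ∑' x : 𝒳, P (y, t, x)

/-- Joint mass of `T = t, X = x`. -/
def margTX (P : 𝒴 × Bool × 𝒳 → ℝ) (t : Bool) (x : 𝒳) : ℝ :=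
  ∑' y : 𝒴, P (y, t, x)

lemma slice_summable {P : 𝒴 × Bool × 𝒳 → ℝ} (hP : Summable P) (t : Bool) (x : 𝒳) :
    Summable (fun y : 𝒴 => P (y, t, x)) := by
  have : Function.Injective (fun y : 𝒴 => (y, t, x)) := by
    intro a b h; simpa using h
  exact hP.comp_injective this

lemma margX_split {P : 𝒴 × Bool × 𝒳 → ℝ} (hP : Summable P) (x : 𝒳) :
    margX P x = margTX P false x + margTX P true x := by
  unfold margX margTX
  have h : ∀ y : 𝒴, (∑' t : Bool, P (y, t, x)) = P (y, false, x) + P (y, true, x) :=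
    fun y => tsum_bool _
  rw [tsum_congr h]
  exact Summable.tsum_add (slice_summable hP false x) (slice_summable hP true x)

lemma margTX_nonneg {P : 𝒴 × Bool × 𝒳 → ℝ} (h : ∀ z, 0 ≤ P z) (t : Bool) (x : 𝒳) :
    0 ≤ margTX P t x :=
  tsum_nonneg (fun y => h _)

lemma le_margTX {P : 𝒴 × Bool × 𝒳 → ℝ} (hP : Summable P) (h : ∀ z, 0 ≤ P z)
    (y : 𝒴) (t : Bool) (x : 𝒳) : P (y, t, x) ≤ margTX P t x :=
  Summable.le_tsum (slice_summable hP t x) y (fun _ _ => h _)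

theorem g_formula_with_randomized_assignment
    (P_O P_E : 𝒴 × Bool × 𝒳 → ℝ)
    (hO_nonneg : ∀ z, 0 ≤ P_O z) (hO_sum : HasSum P_O 1)
    (hE_nonneg : ∀ z, 0 ≤ P_E z) (hE_sum : HasSum P_E 1)
    -- Positivity
    (hposE : 0 < margT P_E true ∧ margT P_E true < 1)
    (hposO : ∀ x : 𝒳, 0 < margX P_O x →
      0 < margTX P_O true x / margX P_O x ∧ margTX P_O true x / margX P_O x < 1)
    -- Randomization: `T ⫫ X` under `P_E`
    (hrand : ∀ (t : Bool) (x : 𝒳), margTX P_E t x = margT P_E t * margX P_E x)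
    -- Modularity (cross-multiplied form): `P_E(Y=y | T=t, X=x) = P_O(Y=y | T=t, X=x)`
    (hmodY : ∀ (y : 𝒴) (t : Bool) (x : 𝒳),
      P_E (y, t, x) * margTX P_O t x = P_O (y, t, x) * margTX P_E t x)
    -- Modularity: `P_E(X=x) = P_O(X=x)`
    (hmodX : ∀ x : 𝒳, margX P_E x = margX P_O x) :
    ∀ (y : 𝒴) (t : Bool) (x : 𝒳),
      P_E (y, t, x) = (P_O (y, t, x) / margTX P_O t x) * margT P_E t * margX P_O x := by
  intro y t x
  have hOs : Summable P_O := hO_sum.summable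
  have hEs : Summable P_E := hE_sum.summable
  have hXnonnegO : 0 ≤ margX P_O x := by
    rw [margX_split hOs]
    exact add_nonneg (margTX_nonneg hO_nonneg _ _) (margTX_nonneg hO_nonneg _ _)
  rcases eq_or_lt_of_le hXnonnegO with hx0 | hxpos
  · -- margX P_O x = 0 case
    have hsplitO := margX_split hOs x
    have ht0 : margTX P_O t x = 0 := by
      have h1 := margTX_nonneg hO_nonneg (𝒴 := 𝒴) (P := P_O) false x
      have h2 := margTX_nonneg hO_nonneg (𝒴 := 𝒴) (P := P_O) true x
      cases t <;> nlinarith [hsplitO, hx0]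
    have hE0 : P_E (y, t, x) = 0 := by
      have hXE : margX P_E x = 0 := by rw [hmodX]; exact hx0.symm
      have hsplitE := margX_split hEs x
      have htE : margTX P_E t x = 0 := by
        have h1 := margTX_nonneg hE_nonneg (𝒴 := 𝒴) (P := P_E) false x
        have h2 := margTX_nonneg hE_nonneg (𝒴 := 𝒴) (P := P_E) true x
        cases t <;> nlinarith
      have := le_margTX hEs hE_nonneg y t x
      have := hE_nonneg (y, t, x)
      linarith
    rw [hE0, ← hx0, mul_zero]
  · -- positive case
    obtain ⟨hr1, hr2⟩ := hposO x hxpos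
    have htrue : 0 < margTX P_O true x := by
      have := (div_pos_iff.mp hr1)
      rcases this with ⟨h, _⟩ | ⟨_, h⟩
      · exact h
      · linarith
    have hlt : margTX P_O true x < margX P_O x := (div_lt_one hxpos).mp hr2
    have hfalse : 0 < margTX P_O false x := by
      have := margX_split hOs x
      linarith
    have htpos : 0 < margTX P_O t x := by cases t <;> assumption
    have hkey := hmodY y t x
    rw [hrand t x, hmodX x] at hkey
    field_simp
    linarith [hkey]
end
end

section
/- Under the positivity, randomization and modularity assumptions, the conditional outcome distribution given administered treatment in the experimental regime is identified from observational quantities: for each t ∈ {0,1} and each outcome value y, P_E(Y=y | T=t) = Σ_x P_O(Y=y | T=t, X=x) · P_O(X=x), the sum ranging over x with P_O(X=x) > 0. -/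
/-!
Discrete target-trial setup: `P_O` and `P_E` are probability mass functions on
`𝒴 × Bool × 𝒳` (outcome `Y`, binary treatment `T`, covariate `X`).
STATEMENT 1: Under positivity, randomization and modularity, the conditional outcome
distribution given administered treatment in the experimental regime is identified
from observational quantities:
`P_E(Y=y | T=t) = ∑_x P_O(Y=y | T=t, X=x) · P_O(X=x)`.
(Terms with `P_O(X=x) = 0` vanish, so the sum effectively ranges over `x` with
`P_O(X=x) > 0`.)
-/

open scoped BigOperators

noncomputable section

variable {𝒴 𝒳 : Type*} [Countable 𝒴] [Countable 𝒳]

/-- Joint mass of `Y = y, T = t`. -/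
def margYT (P : 𝒴 × Bool × 𝒳 → ℝ) (y : 𝒴) (t : Bool) : ℝ :=
  ∑' x : 𝒳, P (y, t, x)

theorem conditional_outcome_identification
    (P_O P_E : 𝒴 × Bool × 𝒳 → ℝ)
    (hO_nonneg : ∀ z, 0 ≤ P_O z) (hO_sum : HasSum P_O 1)
    (hE_nonneg : ∀ z, 0 ≤ P_E z) (hE_sum : HasSum P_E 1)
    -- Positivity
    (hposE : 0 < margT P_E true ∧ margT P_E true < 1)
    (hposO : ∀ x : 𝒳, 0 < margX P_O x →
      0 < margTX P_O true x / margX P_O x ∧ margTX P_O true x / margX P_O x < 1)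
    -- Randomization: `T ⫫ X` under `P_E`
    (hrand : ∀ (t : Bool) (x : 𝒳), margTX P_E t x = margT P_E t * margX P_E x)
    -- Modularity (cross-multiplied form): `P_E(Y=y | T=t, X=x) = P_O(Y=y | T=t, X=x)`
    (hmodY : ∀ (y : 𝒴) (t : Bool) (x : 𝒳),
      P_E (y, t, x) * margTX P_O t x = P_O (y, t, x) * margTX P_E t x)
    -- Modularity: `P_E(X=x) = P_O(X=x)`
    (hmodX : ∀ x : 𝒳, margX P_E x = margX P_O x) :
    ∀ (t : Bool) (y : 𝒴),
      margYT P_E y t / margT P_E t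
        = ∑' x : 𝒳, (P_O (y, t, x) / margTX P_O t x) * margX P_O x := by

  -- Summability facts
  have hEs : Summable P_E := hE_sum.summable
  have hOs : Summable P_O := hO_sum.summable
  have hslice : ∀ (P : 𝒴 × Bool × 𝒳 → ℝ), Summable P → ∀ (t : Bool) (x : 𝒳),
      Summable fun y : 𝒴 => P (y, t, x) := by
    intro P hP t x
    exact hP.comp_injective (fun a b h => by simpa using h)
  have hsplit : ∀ (P : 𝒴 × Bool × 𝒳 → ℝ), Summable P → ∀ x : 𝒳,
      margX P x = margTX P false x + margTX P true x := by
    intro P hP x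
    have h1 : (fun y : 𝒴 => ∑' t : Bool, P (y, t, x))
        = fun y => P (y, false, x) + P (y, true, x) := by
      funext y; exact tsum_bool _
    rw [margX, h1, Summable.tsum_add (hslice P hP false x) (hslice P hP true x)]
    rfl
  have htot : ∀ (P : 𝒴 × Bool × 𝒳 → ℝ), Summable P →
      margT P false + margT P true = ∑' z, P z := by
    intro P hP
    have h0 : ∑' z, P z = ∑' y : 𝒴, ∑' w : Bool × 𝒳, P (y, w) := Summable.tsum_prod hP
    have h1 : ∀ y : 𝒴, Summable fun w : Bool × 𝒳 => P (y, w) := fun y => hP.prod_factor y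
    have h2 : ∀ y : 𝒴, (∑' w : Bool × 𝒳, P (y, w))
        = (∑' x : 𝒳, P (y, false, x)) + (∑' x : 𝒳, P (y, true, x)) := by
      intro y
      rw [Summable.tsum_prod (h1 y), tsum_bool]
    have h3 : ∀ t : Bool, Summable fun y : 𝒴 => ∑' x : 𝒳, P (y, t, x) := by
      intro t
      have hinj : Summable fun p : 𝒴 × 𝒳 => P (p.1, t, p.2) :=
        hP.comp_injective (fun a b h => by
          simp only [Prod.mk.injEq] at h
          exact Prod.ext h.1 h.2.2)
      exact hinj.prod
    rw [h0, tsum_congr h2, Summable.tsum_add (h3 false) (h3 true)]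
    rfl
  have hTsum : margT P_E false + margT P_E true = 1 := by
    rw [htot P_E hEs, hE_sum.tsum_eq]
  have hTpos : ∀ t : Bool, 0 < margT P_E t := by
    intro t
    cases t
    · linarith [hposE.2]
    · exact hposE.1
  have hTXnonneg : ∀ (P : 𝒴 × Bool × 𝒳 → ℝ), (∀ z, 0 ≤ P z) → ∀ t x, 0 ≤ margTX P t x :=
    fun P hnn t x => tsum_nonneg fun y => hnn _
  have hzero : ∀ (y : 𝒴) (t : Bool) (x : 𝒳), margX P_E x = 0 → P_E (y, t, x) = 0 := by
    intro y t x hx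
    rw [hsplit P_E hEs x] at hx
    have hf : margTX P_E false x = 0 ∧ margTX P_E true x = 0 := by
      constructor <;>
        nlinarith [hTXnonneg P_E hE_nonneg false x, hTXnonneg P_E hE_nonneg true x]
    have hle : P_E (y, t, x) ≤ margTX P_E t x :=
      Summable.le_tsum (hslice P_E hEs t x) y (fun b _ => hE_nonneg _)
    have hnn := hE_nonneg (y, t, x)
    cases t
    · linarith [hf.1]
    · linarith [hf.2]
  intro t y
  have key : ∀ x : 𝒳,
      P_E (y, t, x) = margT P_E t * ((P_O (y, t, x) / margTX P_O t x) * margX P_O x) := by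
    intro x
    have hXnn : (0:ℝ) ≤ margX P_O x := by
      unfold margX
      exact tsum_nonneg fun y' => tsum_nonneg fun t' => hO_nonneg _
    rcases eq_or_lt_of_le hXnn with hx | hx
    · rw [hzero y t x (by rw [hmodX x, ← hx]), ← hx]
      ring
    · have h1 := (hposO x hx).1
      have h2 := (hposO x hx).2
      have htrue : 0 < margTX P_O true x := by
        rcases div_pos_iff.mp h1 with ⟨h, _⟩ | ⟨_, h⟩
        · exact h
        · linarith
      have hlt : margTX P_O true x < margX P_O x := (div_lt_one hx).mp h2
      have hfalse : 0 < margTX P_O false x := by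
        have := hsplit P_O hOs x
        linarith
      have ha : (0:ℝ) < margTX P_O t x := by
        cases t
        · exact hfalse
        · exact htrue
      have hm := hmodY y t x
      rw [hrand t x, hmodX x] at hm
      field_simp [ne_of_gt ha]
      linear_combination hm
  calc margYT P_E y t / margT P_E t
      = (∑' x : 𝒳, margT P_E t * ((P_O (y, t, x) / margTX P_O t x) * margX P_O x))
          / margT P_E t := by
        rw [margYT]
        exact congrArg (· / margT P_E t) (tsum_congr key)
    _ = ∑' x : 𝒳, (P_O (y, t, x) / margTX P_O t x) * margX P_O x := by
        rw [tsum_mul_left, mul_div_cancel_left₀ _ (hTpos t).ne']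

end
end

section
/- Under the positivity, randomization and modularity assumptions, the experimental mean outcome under treatment is identified by inverse probability weighting of the observational data: E_{P_E}[Y | T=1] = E_{P_O}[ T·Y / π(X) ], where π(x) = P_O(T=1 | X=x) is the propensity score; similarly E_{P_E}[Y | T=0] = E_{P_O}[ (1−T)·Y / (1−π(X)) ]. -/
/-!
Real-outcome target-trial setup: `(Ω, 𝓕)` carries two probability measures `P_O`
(observational regime) and `P_E` (experimental regime), an integrable real outcome `Y`,
a binary treatment `T : Ω → Bool`, and covariates `X : Ω → 𝒳` with `𝒳` countable.
The propensity score is `π(x) = P_O(T=1 | X=x)`.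
STATEMENT 3: Under positivity, randomization and modularity, the experimental mean outcome
under treatment is identified by inverse probability weighting:
`E_{P_E}[Y | T=1] = E_{P_O}[T·Y/π(X)]`, and similarly
`E_{P_E}[Y | T=0] = E_{P_O}[(1−T)·Y/(1−π(X))]`.
-/

open MeasureTheory
open scoped BigOperators ENNReal

noncomputable section

/-- The propensity score `π(x) = P_O(T=1 | X=x)`, as a ratio of masses. -/
def propScore {Ω : Type*} [MeasurableSpace Ω] {𝒳 : Type*}
    (P_O : Measure Ω) (T : Ω → Bool) (X : Ω → 𝒳) (x : 𝒳) : ℝ :=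
  (P_O {ω | T ω = true ∧ X ω = x}).toReal / (P_O {ω | X ω = x}).toReal


lemma cross_integral
    {Ω : Type*} [MeasurableSpace Ω]
    {𝒳 : Type*} [MeasurableSpace 𝒳] [MeasurableSingletonClass 𝒳]
    (P_O P_E : Measure Ω) [IsFiniteMeasure P_O] [IsFiniteMeasure P_E]
    (Y : Ω → ℝ) (T : Ω → Bool) (X : Ω → 𝒳)
    (hY : Measurable Y)
    (hmodY : ∀ B : Set ℝ, MeasurableSet B → ∀ (t : Bool) (x : 𝒳),
      P_E {ω | Y ω ∈ B ∧ T ω = t ∧ X ω = x} * P_O {ω | T ω = t ∧ X ω = x}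
        = P_O {ω | Y ω ∈ B ∧ T ω = t ∧ X ω = x} * P_E {ω | T ω = t ∧ X ω = x})
    (t : Bool) (x : 𝒳) :
    (P_O {ω | T ω = t ∧ X ω = x}).toReal * ∫ ω in {ω | T ω = t ∧ X ω = x}, Y ω ∂P_E
      = (P_E {ω | T ω = t ∧ X ω = x}).toReal * ∫ ω in {ω | T ω = t ∧ X ω = x}, Y ω ∂P_O := by
  set A : Set Ω := {ω | T ω = t ∧ X ω = x} with hA
  have hmeas : ((P_O A) • P_E.restrict A).map Y = ((P_E A) • P_O.restrict A).map Y := by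
    ext B hB
    rw [Measure.map_apply hY hB, Measure.map_apply hY hB]
    simp only [Measure.smul_apply, Measure.restrict_apply (hY hB), smul_eq_mul]
    have h := hmodY B hB t x
    have hset : {ω | Y ω ∈ B ∧ T ω = t ∧ X ω = x} = Y ⁻¹' B ∩ A := rfl
    rw [hset] at h
    rw [mul_comm, h, mul_comm]
  have hid : AEStronglyMeasurable (fun y : ℝ => y) ((P_O A • P_E.restrict A).map Y) :=
    (measurable_id.aestronglyMeasurable : AEStronglyMeasurable (fun y : ℝ => y) _)
  have hid' : AEStronglyMeasurable (fun y : ℝ => y) ((P_E A • P_O.restrict A).map Y) :=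
    (measurable_id.aestronglyMeasurable : AEStronglyMeasurable (fun y : ℝ => y) _)
  have h2 := congrArg (fun μ : Measure ℝ => ∫ y, y ∂μ) hmeas
  rw [integral_map hY.aemeasurable hid, integral_map hY.aemeasurable hid',
      integral_smul_measure, integral_smul_measure, smul_eq_mul, smul_eq_mul] at h2
  exact h2

lemma ipw_side
    {Ω : Type*} [MeasurableSpace Ω]
    {𝒳 : Type*} [Countable 𝒳] [MeasurableSpace 𝒳] [MeasurableSingletonClass 𝒳]
    (P_O P_E : Measure Ω) [IsProbabilityMeasure P_O] [IsProbabilityMeasure P_E]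
    (Y : Ω → ℝ) (T : Ω → Bool) (X : Ω → 𝒳)
    (hY : Measurable Y) (hT : Measurable T) (hX : Measurable X)
    (hYintE : Integrable Y P_E)
    (t : Bool) (d : 𝒳 → ℝ)
    (hint : Integrable (fun ω => if T ω = t then Y ω / d (X ω) else 0) P_O)
    (hd : ∀ x : 𝒳, 0 < P_O {ω | X ω = x} →
      d x = (P_O {ω | T ω = t ∧ X ω = x}).toReal / (P_O {ω | X ω = x}).toReal)
    (hApos : ∀ x : 𝒳, 0 < P_O {ω | X ω = x} → 0 < P_O {ω | T ω = t ∧ X ω = x})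
    (hct : P_E {ω | T ω = t} ≠ 0)
    (hrand : ∀ (t : Bool) (x : 𝒳),
      P_E {ω | T ω = t ∧ X ω = x} = P_E {ω | T ω = t} * P_E {ω | X ω = x})
    (hmodY : ∀ B : Set ℝ, MeasurableSet B → ∀ (t : Bool) (x : 𝒳),
      P_E {ω | Y ω ∈ B ∧ T ω = t ∧ X ω = x} * P_O {ω | T ω = t ∧ X ω = x}
        = P_O {ω | Y ω ∈ B ∧ T ω = t ∧ X ω = x} * P_E {ω | T ω = t ∧ X ω = x})
    (hmodX : ∀ x : 𝒳, P_E {ω | X ω = x} = P_O {ω | X ω = x}) :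
    (∫ ω in {ω | T ω = t}, Y ω ∂P_E) / (P_E {ω | T ω = t}).toReal
      = ∫ ω, (if T ω = t then Y ω / d (X ω) else 0) ∂P_O := by
  set f : Ω → ℝ := fun ω => if T ω = t then Y ω / d (X ω) else 0 with hf
  set A : 𝒳 → Set Ω := fun x => {ω | T ω = t ∧ X ω = x} with hAdef
  have hAm : ∀ x, MeasurableSet (A x) := fun x =>
    (hT (measurableSet_singleton t)).inter (hX (measurableSet_singleton x))
  have hAdisj : Pairwise (Function.onFun Disjoint A) := by
    intro x y hxy
    simp only [Function.onFun, Set.disjoint_left]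
    rintro ω ⟨_, hx⟩ ⟨_, hy⟩
    exact hxy (hx ▸ hy ▸ rfl)
  have hUnion : (⋃ x, A x) = {ω | T ω = t} := by
    ext ω
    simp only [Set.mem_iUnion, Set.mem_setOf_eq, hAdef]
    exact ⟨fun ⟨x, h, _⟩ => h, fun h => ⟨X ω, h, rfl⟩⟩
  have hTm : MeasurableSet {ω | T ω = t} := hT (measurableSet_singleton t)
  -- decompose RHS
  have hRHS : ∫ ω, f ω ∂P_O = ∑' x, ∫ ω in A x, f ω ∂P_O := by
    have hzero : ∫ ω in {ω | T ω = t}, f ω ∂P_O = ∫ ω, f ω ∂P_O :=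
      setIntegral_eq_integral_of_forall_compl_eq_zero (fun ω hω => if_neg hω)
    rw [← hzero, ← hUnion, integral_iUnion hAm hAdisj (hint.integrableOn)]
  -- decompose LHS numerator
  have hLHS : ∫ ω in {ω | T ω = t}, Y ω ∂P_E = ∑' x, ∫ ω in A x, Y ω ∂P_E := by
    rw [← hUnion, integral_iUnion hAm hAdisj (hYintE.integrableOn)]
  rw [hRHS, hLHS, ← tsum_div_const]
  refine tsum_congr fun x => ?_
  by_cases h0 : P_O {ω | X ω = x} = 0
  · have hAO : P_O (A x) = 0 := measure_mono_null (fun ω hω => hω.2) h0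
    have hxE : P_E {ω | X ω = x} = 0 := (hmodX x).trans h0
    have hAE : P_E (A x) = 0 := measure_mono_null (fun ω hω => hω.2) hxE
    have e1 : ∫ ω in A x, Y ω ∂P_E = 0 := by
      rw [Measure.restrict_eq_zero.mpr hAE]; exact integral_zero_measure _
    have e2 : ∫ ω in A x, f ω ∂P_O = 0 := by
      rw [Measure.restrict_eq_zero.mpr hAO]; exact integral_zero_measure _
    rw [e1, e2, zero_div]
  · have hxpos : 0 < P_O {ω | X ω = x} := pos_iff_ne_zero.mpr h0
    have hAOpos : 0 < P_O (A x) := hApos x hxpos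
    have haR : 0 < (P_O (A x)).toReal := ENNReal.toReal_pos hAOpos.ne' (measure_ne_top _ _)
    have hpR : 0 < (P_O {ω | X ω = x}).toReal := ENNReal.toReal_pos h0 (measure_ne_top _ _)
    have hcR : 0 < (P_E {ω | T ω = t}).toReal := ENNReal.toReal_pos hct (measure_ne_top _ _)
    have key := cross_integral P_O P_E Y T X hY hmodY t x
    have hPEA : (P_E (A x)).toReal
        = (P_E {ω | T ω = t}).toReal * (P_O {ω | X ω = x}).toReal := by
      show (P_E {ω | T ω = t ∧ X ω = x}).toReal = _
      rw [hrand t x, hmodX x, ENNReal.toReal_mul]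
    have hfA : ∫ ω in A x, f ω ∂P_O = ∫ ω in A x, Y ω / d x ∂P_O :=
      setIntegral_congr_fun (hAm x)
        (fun ω hω => by simp only [hf, hω.1, hω.2, if_true])
    rw [hfA, integral_div, hd x hxpos]
    have key' : (P_O (A x)).toReal * (∫ ω in A x, Y ω ∂P_E)
        = (P_E {ω | T ω = t}).toReal * (P_O {ω | X ω = x}).toReal
          * (∫ ω in A x, Y ω ∂P_O) := by
      rw [← hPEA]; exact key
    have hIE : (∫ ω in A x, Y ω ∂P_E)
        = (P_E {ω | T ω = t}).toReal * (P_O {ω | X ω = x}).toReal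
          * (∫ ω in A x, Y ω ∂P_O) / (P_O (A x)).toReal := by
      rw [eq_div_iff haR.ne', mul_comm _ ((P_O (A x)).toReal)]
      exact key'
    rw [hIE]
    rw [show (P_O {ω | T ω = t ∧ X ω = x}).toReal = (P_O (A x)).toReal from rfl]
    field_simp

theorem ipw_identification
    {Ω : Type*} [MeasurableSpace Ω]
    {𝒳 : Type*} [Countable 𝒳] [MeasurableSpace 𝒳] [MeasurableSingletonClass 𝒳]
    (P_O P_E : Measure Ω) [IsProbabilityMeasure P_O] [IsProbabilityMeasure P_E]
    (Y : Ω → ℝ) (T : Ω → Bool) (X : Ω → 𝒳)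
    (hY : Measurable Y) (hT : Measurable T) (hX : Measurable X)
    (hYintO : Integrable Y P_O) (hYintE : Integrable Y P_E)
    -- `T·Y/π(X)` and `(1−T)·Y/(1−π(X))` are integrable under `P_O`
    (hint1 : Integrable
      (fun ω => if T ω = true then Y ω / propScore P_O T X (X ω) else 0) P_O)
    (hint0 : Integrable
      (fun ω => if T ω = false then Y ω / (1 - propScore P_O T X (X ω)) else 0) P_O)
    -- Positivity: `0 < P_E(T=1) < 1`
    (hposE : 0 < P_E {ω | T ω = true} ∧ P_E {ω | T ω = true} < 1)
    -- Positivity: `0 < P_O(T=1 | X=x) < 1` whenever `P_O(X=x) > 0`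
    (hposO : ∀ x : 𝒳, 0 < P_O {ω | X ω = x} →
      0 < P_O {ω | T ω = true ∧ X ω = x} ∧
        P_O {ω | T ω = true ∧ X ω = x} < P_O {ω | X ω = x})
    -- Randomization: `T ⫫ X` under `P_E`
    (hrand : ∀ (t : Bool) (x : 𝒳),
      P_E {ω | T ω = t ∧ X ω = x} = P_E {ω | T ω = t} * P_E {ω | X ω = x})
    -- Modularity (cross-multiplied form):
    -- `P_E(Y ∈ B | T=t, X=x) = P_O(Y ∈ B | T=t, X=x)` for all Borel `B`
    (hmodY : ∀ B : Set ℝ, MeasurableSet B → ∀ (t : Bool) (x : 𝒳),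
      P_E {ω | Y ω ∈ B ∧ T ω = t ∧ X ω = x} * P_O {ω | T ω = t ∧ X ω = x}
        = P_O {ω | Y ω ∈ B ∧ T ω = t ∧ X ω = x} * P_E {ω | T ω = t ∧ X ω = x})
    -- Modularity: `P_E(X=x) = P_O(X=x)`
    (hmodX : ∀ x : 𝒳, P_E {ω | X ω = x} = P_O {ω | X ω = x}) :
    (∫ ω in {ω | T ω = true}, Y ω ∂P_E) / (P_E {ω | T ω = true}).toReal
      = ∫ ω, (if T ω = true then Y ω / propScore P_O T X (X ω) else 0) ∂P_O
    ∧ (∫ ω in {ω | T ω = false}, Y ω ∂P_E) / (P_E {ω | T ω = false}).toReal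
      = ∫ ω, (if T ω = false then Y ω / (1 - propScore P_O T X (X ω)) else 0) ∂P_O := by
  constructor
  · exact ipw_side P_O P_E Y T X hY hT hX hYintE true (propScore P_O T X) hint1
      (fun x hx => rfl) (fun x hx => (hposO x hx).1) hposE.1.ne' hrand hmodY hmodX
  · -- split of the covariate event by treatment
    have hsplit : ∀ x : 𝒳, P_O {ω | X ω = x}
        = P_O {ω | T ω = true ∧ X ω = x} + P_O {ω | T ω = false ∧ X ω = x} := by
      intro x
      have hu : {ω | X ω = x}
          = {ω | T ω = true ∧ X ω = x} ∪ {ω | T ω = false ∧ X ω = x} := by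
        ext ω; cases hTt : T ω <;> simp [hTt]
      have hdisj : Disjoint {ω | T ω = true ∧ X ω = x} {ω | T ω = false ∧ X ω = x} := by
        simp only [Set.disjoint_left]
        rintro ω ⟨h1, -⟩ ⟨h2, -⟩
        rw [h1] at h2; exact Bool.noConfusion h2
      have hm0 : MeasurableSet {ω | T ω = false ∧ X ω = x} :=
        (hT (measurableSet_singleton false)).inter (hX (measurableSet_singleton x))
      rw [hu, measure_union hdisj hm0]
    have hbpos : ∀ x : 𝒳, 0 < P_O {ω | X ω = x} →
        0 < P_O {ω | T ω = false ∧ X ω = x} := by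
      intro x hx
      rw [pos_iff_ne_zero]
      intro hb
      have := hsplit x
      rw [hb, add_zero] at this
      exact absurd this.symm (hposO x hx).2.ne
    have hd0 : ∀ x : 𝒳, 0 < P_O {ω | X ω = x} →
        1 - propScore P_O T X x
          = (P_O {ω | T ω = false ∧ X ω = x}).toReal / (P_O {ω | X ω = x}).toReal := by
      intro x hx
      have hpR : 0 < (P_O {ω | X ω = x}).toReal :=
        ENNReal.toReal_pos hx.ne' (measure_ne_top _ _)
      have hsum : (P_O {ω | X ω = x}).toReal
          = (P_O {ω | T ω = true ∧ X ω = x}).toReal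
            + (P_O {ω | T ω = false ∧ X ω = x}).toReal := by
        rw [hsplit x, ENNReal.toReal_add (measure_ne_top _ _) (measure_ne_top _ _)]
      rw [propScore, eq_div_iff hpR.ne', sub_mul, div_mul_cancel₀ _ hpR.ne', one_mul]
      linarith
    have hct0 : P_E {ω | T ω = false} ≠ 0 := by
      have hc : {ω | T ω = false} = {ω | T ω = true}ᶜ := by
        ext ω; simp
      rw [hc, prob_compl_eq_one_sub (s := {ω | T ω = true}) (hT (measurableSet_singleton true))]
      intro h
      exact absurd (tsub_eq_zero_iff_le.mp h) (not_le.mpr hposE.2)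
    exact ipw_side P_O P_E Y T X hY hT hX hYintE false
      (fun x => 1 - propScore P_O T X x) hint0 hd0 hbpos hct0 hrand hmodY hmodX

end
end

section
/- Under the extended positivity, extended randomization, conditional ignorability and extended modularity assumptions, the experimental law of (Y, T, T^O, X) factorizes according to the extended g-formula with randomized assignment: for all y, t, t', x, P_E(Y=y, T=t, T^O=t', X=x) = P_O(Y=y | T=t, X=x) · P_E(T=t) · P_O(T^O=t' | X=x) · P_O(X=x), where any factor whose conditioning event has P_O-mass zero makes both sides zero. -/
/-!
Extended discrete target-trial setup: `P_O` and `P_E` are probability mass functions on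
`𝒴 × Bool × Bool × 𝒳` with coordinates `(Y, T, T^O, X)` (outcome, administered treatment,
natural treatment assignment, covariate); under `P_O` the event `{T = T^O}` has probability 1.
STATEMENT 5: Under extended positivity, extended randomization, conditional ignorability and
extended modularity, the experimental law factorizes according to the extended g-formula with
randomized assignment:
`P_E(Y=y, T=t, T^O=t', X=x)
  = P_O(Y=y | T=t, X=x) · P_E(T=t) · P_O(T^O=t' | X=x) · P_O(X=x)`.
(Conditional probabilities are ratios of masses; with the `0/0 = 0` division convention, any
factor whose conditioning event has `P_O`-mass zero makes both sides zero.)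
-/

open scoped BigOperators

noncomputable section

variable {𝒴 𝒳 : Type*} [Countable 𝒴] [Countable 𝒳]

/-- Marginal mass of `X = x` (coordinates are `(Y, T, T^O, X)`). -/
def mX (P : 𝒴 × Bool × Bool × 𝒳 → ℝ) (x : 𝒳) : ℝ :=
  ∑' y : 𝒴, ∑' t : Bool, ∑' t' : Bool, P (y, t, t', x)

/-- Marginal mass of `T = t`. -/
def mT (P : 𝒴 × Bool × Bool × 𝒳 → ℝ) (t : Bool) : ℝ :=
  ∑' y : 𝒴, ∑' t' : Bool, ∑' x : 𝒳, P (y, t, t', x)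

/-- Marginal mass of `T^O = t'`. -/
def mTo (P : 𝒴 × Bool × Bool × 𝒳 → ℝ) (t' : Bool) : ℝ :=
  ∑' y : 𝒴, ∑' t : Bool, ∑' x : 𝒳, P (y, t, t', x)

/-- Joint mass of `T = t, X = x`. -/
def mTX (P : 𝒴 × Bool × Bool × 𝒳 → ℝ) (t : Bool) (x : 𝒳) : ℝ :=
  ∑' y : 𝒴, ∑' t' : Bool, P (y, t, t', x)

/-- Joint mass of `T^O = t', X = x`. -/
def mToX (P : 𝒴 × Bool × Bool × 𝒳 → ℝ) (t' : Bool) (x : 𝒳) : ℝ :=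
  ∑' y : 𝒴, ∑' t : Bool, P (y, t, t', x)

/-- Joint mass of `Y = y, T = t, X = x`. -/
def mYTX (P : 𝒴 × Bool × Bool × 𝒳 → ℝ) (y : 𝒴) (t : Bool) (x : 𝒳) : ℝ :=
  ∑' t' : Bool, P (y, t, t', x)

/-- Joint mass of `T = t, T^O = t', X = x`. -/
def mTToX (P : 𝒴 × Bool × Bool × 𝒳 → ℝ) (t t' : Bool) (x : 𝒳) : ℝ :=
  ∑' y : 𝒴, P (y, t, t', x)

/-- Joint mass of `T = t, T^O = t'`. -/
def mTTo (P : 𝒴 × Bool × Bool × 𝒳 → ℝ) (t t' : Bool) : ℝ :=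
  ∑' y : 𝒴, ∑' x : 𝒳, P (y, t, t', x)

/-- Joint mass of `Y = y, T = t, T^O = t'`. -/
def mYTTo (P : 𝒴 × Bool × Bool × 𝒳 → ℝ) (y : 𝒴) (t t' : Bool) : ℝ :=
  ∑' x : 𝒳, P (y, t, t', x)

set_option linter.unusedSectionVars false

section helpers
variable {P : 𝒴 × Bool × Bool × 𝒳 → ℝ}

lemma sumY (hP : Summable P) (t t' : Bool) (x : 𝒳) :
    Summable fun y : 𝒴 => P (y, t, t', x) :=
  hP.comp_injective (i := fun y : 𝒴 => (y, t, t', x)) (by intro a b h; simpa using h)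

lemma sumX (hP : Summable P) (y : 𝒴) (t t' : Bool) :
    Summable fun x : 𝒳 => P (y, t, t', x) :=
  hP.comp_injective (i := fun x : 𝒳 => (y, t, t', x)) (by intro a b h; simpa using h)

lemma sumYX (hP : Summable P) (t t' : Bool) :
    Summable fun p : 𝒴 × 𝒳 => P (p.1, t, t', p.2) :=
  hP.comp_injective (i := fun p : 𝒴 × 𝒳 => (p.1, t, t', p.2))
    (by intro a b h; simp [Prod.ext_iff] at h; exact Prod.ext h.1 h.2)

lemma sumYofX (hP : Summable P) (t t' : Bool) :
    Summable fun y : 𝒴 => ∑' x : 𝒳, P (y, t, t', x) := by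
  obtain ⟨a, ha⟩ := sumYX hP t t'
  exact ⟨a, ha.prod_fiberwise fun y => (sumX hP y t t').hasSum⟩

lemma mTX_split (hP : Summable P) (t : Bool) (x : 𝒳) :
    mTX P t x = mTToX P t false x + mTToX P t true x := by
  rw [mTX, mTToX, mTToX, ← Summable.tsum_add (sumY hP t false x) (sumY hP t true x)]
  exact tsum_congr fun y => tsum_bool _

lemma mX_split (hP : Summable P) (x : 𝒳) :
    mX P x = mToX P false x + mToX P true x := by
  have h1 : ∀ t' : Bool, mToX P t' x
      = (∑' y : 𝒴, P (y, false, t', x)) + ∑' y : 𝒴, P (y, true, t', x) := by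
    intro t'
    rw [mToX, ← Summable.tsum_add (sumY hP false t' x) (sumY hP true t' x)]
    exact tsum_congr fun y => tsum_bool _
  rw [h1, h1, mX]
  have h2 : ∀ y : 𝒴, (∑' t : Bool, ∑' t' : Bool, P (y, t, t', x))
      = (P (y, false, false, x) + P (y, true, false, x))
        + (P (y, false, true, x) + P (y, true, true, x)) := by
    intro y; rw [tsum_bool, tsum_bool, tsum_bool]; ring
  rw [tsum_congr h2,
    Summable.tsum_add ((sumY hP false false x).add (sumY hP true false x))
      ((sumY hP false true x).add (sumY hP true true x)),
    Summable.tsum_add (sumY hP false false x) (sumY hP true false x),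
    Summable.tsum_add (sumY hP false true x) (sumY hP true true x)]

lemma point_le_mX (hP : Summable P) (h0 : ∀ z, 0 ≤ P z) (y : 𝒴) (t t' : Bool) (x : 𝒳) :
    P (y, t, t', x) ≤ mX P x := by
  have h2 : ∀ y : 𝒴, (∑' t : Bool, ∑' t' : Bool, P (y, t, t', x))
      = (P (y, false, false, x) + P (y, true, false, x))
        + (P (y, false, true, x) + P (y, true, true, x)) := by
    intro y; rw [tsum_bool, tsum_bool, tsum_bool]; ring
  rw [mX, tsum_congr h2]
  have hs : Summable fun y : 𝒴 =>
      (P (y, false, false, x) + P (y, true, false, x))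
        + (P (y, false, true, x) + P (y, true, true, x)) :=
    ((sumY hP false false x).add (sumY hP true false x)).add
      ((sumY hP false true x).add (sumY hP true true x))
  calc P (y, t, t', x) ≤ (P (y, false, false, x) + P (y, true, false, x))
        + (P (y, false, true, x) + P (y, true, true, x)) := by
        cases t <;> cases t' <;>
          nlinarith [h0 (y, false, false, x), h0 (y, true, false, x),
            h0 (y, false, true, x), h0 (y, true, true, x)]
    _ ≤ _ := Summable.le_tsum hs y fun b _ => by
        have := h0 (b, false, false, x); have := h0 (b, true, false, x)
        have := h0 (b, false, true, x); have := h0 (b, true, true, x); linarith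

lemma point_le_mT (hP : Summable P) (h0 : ∀ z, 0 ≤ P z) (y : 𝒴) (t t' : Bool) (x : 𝒳) :
    P (y, t, t', x) ≤ mT P t := by
  have h2 : ∀ y : 𝒴, (∑' t' : Bool, ∑' x : 𝒳, P (y, t, t', x))
      = (∑' x : 𝒳, P (y, t, false, x)) + ∑' x : 𝒳, P (y, t, true, x) := fun y => tsum_bool _
  rw [mT, tsum_congr h2]
  have hs : Summable fun y : 𝒴 =>
      (∑' x : 𝒳, P (y, t, false, x)) + ∑' x : 𝒳, P (y, t, true, x) :=
    (sumYofX hP t false).add (sumYofX hP t true)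
  have hx : P (y, t, t', x) ≤ ∑' x : 𝒳, P (y, t, t', x) :=
    Summable.le_tsum (sumX hP y t t') x fun b _ => h0 _
  calc P (y, t, t', x)
      ≤ (∑' x : 𝒳, P (y, t, false, x)) + ∑' x : 𝒳, P (y, t, true, x) := by
        cases t' <;>
          nlinarith [(tsum_nonneg (fun x : 𝒳 => h0 (y, t, true, x)) :
              0 ≤ ∑' x : 𝒳, P (y, t, true, x)),
            (tsum_nonneg (fun x : 𝒳 => h0 (y, t, false, x)) :
              0 ≤ ∑' x : 𝒳, P (y, t, false, x)), hx]
    _ ≤ _ := Summable.le_tsum hs y fun b _ =>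
        add_nonneg (tsum_nonneg fun x => h0 _) (tsum_nonneg fun x => h0 _)

end helpers

theorem extended_g_formula_with_randomized_assignment
    (P_O P_E : 𝒴 × Bool × Bool × 𝒳 → ℝ)
    (hO_nonneg : ∀ z, 0 ≤ P_O z) (hO_sum : HasSum P_O 1)
    (hE_nonneg : ∀ z, 0 ≤ P_E z) (hE_sum : HasSum P_E 1)
    -- under `P_O`, `T = T^O` with probability one
    (hTTo : ∀ (y : 𝒴) (t t' : Bool) (x : 𝒳), t ≠ t' → P_O (y, t, t', x) = 0)
    -- Positivity
    (hposE : 0 < mT P_E true ∧ mT P_E true < 1)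
    (hposO : ∀ x : 𝒳, 0 < mX P_O x →
      0 < mToX P_O true x / mX P_O x ∧ mToX P_O true x / mX P_O x < 1)
    -- Extended randomization: `T ⫫ (T^O, X)` under `P_E`
    (hrand : ∀ (t t' : Bool) (x : 𝒳), mTToX P_E t t' x = mT P_E t * mToX P_E t' x)
    -- Conditional ignorability: `Y ⫫ T^O ∣ (T, X)` under `P_E` (cross-multiplied form)
    (hign : ∀ (y : 𝒴) (t t' : Bool) (x : 𝒳),
      P_E (y, t, t', x) * mTX P_E t x = mYTX P_E y t x * mTToX P_E t t' x)
    -- Extended modularity (cross-multiplied forms)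
    (hmodY : ∀ (y : 𝒴) (t : Bool) (x : 𝒳),
      mYTX P_E y t x * mTX P_O t x = mYTX P_O y t x * mTX P_E t x)
    (hmodTo : ∀ (t' : Bool) (x : 𝒳),
      mToX P_E t' x * mX P_O x = mToX P_O t' x * mX P_E x)
    (hmodX : ∀ x : 𝒳, mX P_E x = mX P_O x) :
    ∀ (y : 𝒴) (t t' : Bool) (x : 𝒳),
      P_E (y, t, t', x)
        = (mYTX P_O y t x / mTX P_O t x) * mT P_E t
            * (mToX P_O t' x / mX P_O x) * mX P_O x := by
  intro y t t' x
  have hOs : Summable P_O := hO_sum.summable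
  have hEs : Summable P_E := hE_sum.summable
  by_cases hx : mX P_O x = 0
  · have h1 : P_E (y, t, t', x) = 0 :=
      le_antisymm (by
        calc P_E (y, t, t', x) ≤ mX P_E x := point_le_mX hEs hE_nonneg y t t' x
          _ = 0 := (hmodX x).trans hx) (hE_nonneg _)
    simp [hx, h1]
  · have hxpos : 0 < mX P_O x :=
      lt_of_le_of_ne
        (tsum_nonneg fun y => tsum_nonneg fun t => tsum_nonneg fun t' => hO_nonneg _)
        (Ne.symm hx)
    obtain ⟨hr1, hr2⟩ := hposO x hxpos
    have htrue : 0 < mToX P_O true x := by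
      have := mul_pos hr1 hxpos; rwa [div_mul_cancel₀ _ hx] at this
    have hsplit := mX_split hOs (P := P_O) x
    have hfalse : 0 < mToX P_O false x := by
      have := (div_lt_one hxpos).1 hr2; linarith
    have hTXO : ∀ s : Bool, mTX P_O s x = mToX P_O s x := by
      intro s
      cases s
      · have e1 : mTToX P_O false true x = 0 :=
          (tsum_congr fun y => hTTo y false true x (by simp)).trans tsum_zero
        have e2 : mToX P_O false x = mTToX P_O false false x := by
          rw [mToX, mTToX]
          refine tsum_congr fun y => ?_
          rw [tsum_bool, hTTo y true false x (by simp), add_zero]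
        rw [mTX_split hOs, e1, add_zero, e2]
      · have e1 : mTToX P_O true false x = 0 :=
          (tsum_congr fun y => hTTo y true false x (by simp)).trans tsum_zero
        have e2 : mToX P_O true x = mTToX P_O true true x := by
          rw [mToX, mTToX]
          refine tsum_congr fun y => ?_
          rw [tsum_bool, hTTo y false true x (by simp), zero_add]
        rw [mTX_split hOs, e1, zero_add, e2]
    have hTXOpos : 0 < mTX P_O t x := by
      rw [hTXO]; cases t; exacts [hfalse, htrue]
    have hXE : mX P_E x = mX P_O x := hmodX x
    have h4 : mTX P_E t x = mT P_E t * mX P_E x := by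
      rw [mTX_split hEs, hrand, hrand, mX_split hEs, mul_add]
    by_cases hT : mT P_E t = 0
    · have h1 : P_E (y, t, t', x) = 0 :=
        le_antisymm ((point_le_mT hEs hE_nonneg y t t' x).trans (le_of_eq hT)) (hE_nonneg _)
      rw [h1, hT]; ring
    · have h5 := hign y t t' x
      rw [h4, hrand] at h5
      have h6 : P_E (y, t, t', x) * mX P_E x = mYTX P_E y t x * mToX P_E t' x :=
        mul_left_cancel₀ hT (by linear_combination h5)
      have hToE : mToX P_E t' x = mToX P_O t' x := by
        have h := hmodTo t' x; rw [hXE] at h; exact mul_right_cancel₀ hx h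
      have hYE : mYTX P_E y t x * mTX P_O t x = mYTX P_O y t x * (mT P_E t * mX P_O x) := by
        rw [← hXE, ← h4]; exact hmodY y t x
      have hne : mTX P_O t x ≠ 0 := ne_of_gt hTXOpos
      rw [hXE, hToE] at h6
      field_simp
      refine mul_right_cancel₀ hx ?_
      linear_combination (mTX P_O t x) * h6 + (mToX P_O t' x) * hYE

end
end

section
/- Under the extended positivity, extended randomization, conditional ignorability and extended modularity assumptions, the intention-to-treat outcome distribution in the experimental regime is identified as: for each t ∈ {0,1} and outcome value y, P_E(Y=y | T=t, T^O=1) = Σ_x P_O(Y=y | T=t, X=x) · P_O(X=x | T^O=1), the sum ranging over x with P_O(X=x, T^O=1) > 0. -/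
/-!
Extended discrete target-trial setup: `P_O` and `P_E` are probability mass functions on
`𝒴 × Bool × Bool × 𝒳` with coordinates `(Y, T, T^O, X)`; under `P_O` the event `{T = T^O}`
has probability 1.
STATEMENT 6: Under extended positivity, extended randomization, conditional ignorability and
extended modularity, the intention-to-treat outcome distribution is identified:
`P_E(Y=y | T=t, T^O=1) = ∑_x P_O(Y=y | T=t, X=x) · P_O(X=x | T^O=1)`.
(Terms with `P_O(X=x, T^O=1) = 0` vanish, so the sum effectively ranges over `x` with
`P_O(X=x, T^O=1) > 0`.)
-/

open scoped BigOperators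

noncomputable section

variable {𝒴 𝒳 : Type*} [Countable 𝒴] [Countable 𝒳]

set_option linter.unusedSectionVars false

section ITTAux
variable (P : 𝒴 × Bool × Bool × 𝒳 → ℝ)

lemma itt_sum_y (hs : Summable P) (t t' : Bool) (x : 𝒳) :
    Summable fun y : 𝒴 => P (y, t, t', x) :=
  hs.comp_injective fun a b h => by
    simp only [Prod.mk.injEq] at h; exact h.1

lemma itt_sum_yx (hs : Summable P) (t t' : Bool) :
    Summable fun p : 𝒴 × 𝒳 => P (p.1, t, t', p.2) :=
  hs.comp_injective fun a b h => by
    simp only [Prod.mk.injEq] at h; exact Prod.ext h.1 h.2.2.2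

lemma itt_sum_ybx (hs : Summable P) (t : Bool) :
    Summable fun p : 𝒴 × (Bool × 𝒳) => P (p.1, t, p.2.1, p.2.2) :=
  hs.comp_injective fun a b h => by
    simp only [Prod.mk.injEq] at h
    exact Prod.ext h.1 (Prod.ext h.2.2.1 h.2.2.2)

lemma mYTX_eq (y : 𝒴) (t : Bool) (x : 𝒳) :
    mYTX P y t x = P (y, t, false, x) + P (y, t, true, x) := tsum_bool _

lemma mTX_eq (hs : Summable P) (t : Bool) (x : 𝒳) :
    mTX P t x = mTToX P t false x + mTToX P t true x := by
  unfold mTX mTToX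
  rw [← Summable.tsum_add (itt_sum_y P hs t false x) (itt_sum_y P hs t true x)]
  exact tsum_congr fun y => tsum_bool _

lemma mToX_eq (hs : Summable P) (t' : Bool) (x : 𝒳) :
    mToX P t' x = mTToX P false t' x + mTToX P true t' x := by
  unfold mToX mTToX
  rw [← Summable.tsum_add (itt_sum_y P hs false t' x) (itt_sum_y P hs true t' x)]
  exact tsum_congr fun y => tsum_bool _

lemma mX_eq4 (hs : Summable P) (x : 𝒳) :
    mX P x = (mTToX P false false x + mTToX P false true x)
      + (mTToX P true false x + mTToX P true true x) := by
  have h1 := itt_sum_y P hs false false x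
  have h2 := itt_sum_y P hs false true x
  have h3 := itt_sum_y P hs true false x
  have h4 := itt_sum_y P hs true true x
  unfold mX mTToX
  rw [← Summable.tsum_add h1 h2, ← Summable.tsum_add h3 h4, ← Summable.tsum_add ((h1.add h2)) ((h3.add h4))]
  exact tsum_congr fun y => by rw [tsum_bool, tsum_bool, tsum_bool]

lemma mX_eqTX (hs : Summable P) (x : 𝒳) :
    mX P x = mTX P false x + mTX P true x := by
  rw [mX_eq4 P hs, mTX_eq P hs, mTX_eq P hs]

lemma mX_eqTo (hs : Summable P) (x : 𝒳) :
    mX P x = mToX P false x + mToX P true x := by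
  rw [mX_eq4 P hs, mToX_eq P hs, mToX_eq P hs]; ring

lemma mTTo_eq (hs : Summable P) (t t' : Bool) :
    mTTo P t t' = ∑' x : 𝒳, mTToX P t t' x :=
  (Summable.tsum_comm (f := fun (y : 𝒴) (x : 𝒳) => P (y, t, t', x)) (itt_sum_yx P hs t t')).symm

lemma mTo_eq (hs : Summable P) (t' : Bool) :
    mTo P t' = ∑' x : 𝒳, mToX P t' x := by
  have hA : ∀ t : Bool, (∑' y : 𝒴, ∑' x : 𝒳, P (y, t, t', x))
      = ∑' x : 𝒳, ∑' y : 𝒴, P (y, t, t', x) := fun t =>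
    (Summable.tsum_comm (f := fun (y : 𝒴) (x : 𝒳) => P (y, t, t', x)) (itt_sum_yx P hs t t')).symm
  have hsum1 : ∀ t : Bool, Summable fun y : 𝒴 => ∑' x : 𝒳, P (y, t, t', x) := fun t =>
    (itt_sum_yx P hs t t').prod
  have hsum2 : ∀ t : Bool, Summable fun x : 𝒳 => ∑' y : 𝒴, P (y, t, t', x) := fun t =>
    ((itt_sum_yx P hs t t').prod_symm).prod
  calc mTo P t'
      = ∑' y : 𝒴, ((∑' x : 𝒳, P (y, false, t', x)) + ∑' x : 𝒳, P (y, true, t', x)) :=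
        tsum_congr fun y => tsum_bool _
    _ = (∑' y : 𝒴, ∑' x : 𝒳, P (y, false, t', x)) + ∑' y : 𝒴, ∑' x : 𝒳, P (y, true, t', x) :=
        Summable.tsum_add (hsum1 false) (hsum1 true)
    _ = (∑' x : 𝒳, ∑' y : 𝒴, P (y, false, t', x)) + ∑' x : 𝒳, ∑' y : 𝒴, P (y, true, t', x) := by
        rw [hA false, hA true]
    _ = ∑' x : 𝒳, ((∑' y : 𝒴, P (y, false, t', x)) + ∑' y : 𝒴, P (y, true, t', x)) :=
        (Summable.tsum_add (hsum2 false) (hsum2 true)).symm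
    _ = ∑' x : 𝒳, mToX P t' x := tsum_congr fun x => (mToX_eq P hs t' x).symm

lemma mT_eq (hs : Summable P) (t : Bool) :
    mT P t = ∑' x : 𝒳, mTX P t x := by
  have hA : ∀ t' : Bool, (∑' y : 𝒴, ∑' x : 𝒳, P (y, t, t', x))
      = ∑' x : 𝒳, ∑' y : 𝒴, P (y, t, t', x) := fun t' =>
    (Summable.tsum_comm (f := fun (y : 𝒴) (x : 𝒳) => P (y, t, t', x)) (itt_sum_yx P hs t t')).symm
  have hsum1 : ∀ t' : Bool, Summable fun y : 𝒴 => ∑' x : 𝒳, P (y, t, t', x) := fun t' =>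
    (itt_sum_yx P hs t t').prod
  have hsum2 : ∀ t' : Bool, Summable fun x : 𝒳 => ∑' y : 𝒴, P (y, t, t', x) := fun t' =>
    ((itt_sum_yx P hs t t').prod_symm).prod
  calc mT P t
      = ∑' y : 𝒴, ((∑' x : 𝒳, P (y, t, false, x)) + ∑' x : 𝒳, P (y, t, true, x)) :=
        tsum_congr fun y => tsum_bool _
    _ = (∑' y : 𝒴, ∑' x : 𝒳, P (y, t, false, x)) + ∑' y : 𝒴, ∑' x : 𝒳, P (y, t, true, x) :=
        Summable.tsum_add (hsum1 false) (hsum1 true)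
    _ = (∑' x : 𝒳, ∑' y : 𝒴, P (y, t, false, x)) + ∑' x : 𝒳, ∑' y : 𝒴, P (y, t, true, x) := by
        rw [hA false, hA true]
    _ = ∑' x : 𝒳, ((∑' y : 𝒴, P (y, t, false, x)) + ∑' y : 𝒴, P (y, t, true, x)) :=
        (Summable.tsum_add (hsum2 false) (hsum2 true)).symm
    _ = ∑' x : 𝒳, mTX P t x := tsum_congr fun x => (mTX_eq P hs t x).symm

lemma total_eq (hs : Summable P) :
    mT P false + mT P true = ∑' z, P z := by
  have h2 : ∀ (y : 𝒴) (t : Bool), (∑' v : Bool × 𝒳, P (y, t, v))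
      = ∑' t' : Bool, ∑' x : 𝒳, P (y, t, t', x) := fun y t =>
    Summable.tsum_prod ((hs.prod_factor y).prod_factor t)
  have hg : ∀ t : Bool, Summable fun y : 𝒴 => ∑' v : Bool × 𝒳, P (y, t, v) := fun t =>
    (itt_sum_ybx P hs t).prod
  have h0 : (∑' z, P z)
      = ∑' y : 𝒴, ((∑' v : Bool × 𝒳, P (y, false, v)) + ∑' v : Bool × 𝒳, P (y, true, v)) := by
    rw [Summable.tsum_prod hs]
    exact tsum_congr fun y => by
      rw [Summable.tsum_prod (hs.prod_factor y), tsum_bool]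
  rw [h0, Summable.tsum_add (hg false) (hg true)]
  unfold mT
  congr 1 <;> exact (tsum_congr fun y => h2 y _).symm

lemma mX_nonneg (hn : ∀ z, 0 ≤ P z) (x : 𝒳) : 0 ≤ mX P x :=
  tsum_nonneg fun _ => tsum_nonneg fun _ => tsum_nonneg fun _ => hn _

lemma mTToX_nonneg (hn : ∀ z, 0 ≤ P z) (t t' : Bool) (x : 𝒳) : 0 ≤ mTToX P t t' x :=
  tsum_nonneg fun _ => hn _

lemma mToX_nonneg (hn : ∀ z, 0 ≤ P z) (t' : Bool) (x : 𝒳) : 0 ≤ mToX P t' x :=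
  tsum_nonneg fun _ => tsum_nonneg fun _ => hn _

lemma mToX_le_mX (hs : Summable P) (hn : ∀ z, 0 ≤ P z) (t' : Bool) (x : 𝒳) :
    mToX P t' x ≤ mX P x := by
  have h0 := mToX_nonneg P hn false x
  have h1 := mToX_nonneg P hn true x
  rw [mX_eqTo P hs x]
  cases t' <;> linarith

lemma mTToX_le_mX (hs : Summable P) (hn : ∀ z, 0 ≤ P z) (t t' : Bool) (x : 𝒳) :
    mTToX P t t' x ≤ mX P x := by
  have h1 := mTToX_nonneg P hn false false x
  have h2 := mTToX_nonneg P hn false true x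
  have h3 := mTToX_nonneg P hn true false x
  have h4 := mTToX_nonneg P hn true true x
  rw [mX_eq4 P hs x]
  cases t <;> cases t' <;> linarith

lemma P_le_mX (hs : Summable P) (hn : ∀ z, 0 ≤ P z) (y : 𝒴) (t t' : Bool) (x : 𝒳) :
    P (y, t, t', x) ≤ mX P x :=
  le_trans (Summable.le_tsum (itt_sum_y P hs t t' x) y fun _ _ => hn _) (mTToX_le_mX P hs hn t t' x)

end ITTAux

theorem intention_to_treat_identification
    (P_O P_E : 𝒴 × Bool × Bool × 𝒳 → ℝ)
    (hO_nonneg : ∀ z, 0 ≤ P_O z) (hO_sum : HasSum P_O 1)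
    (hE_nonneg : ∀ z, 0 ≤ P_E z) (hE_sum : HasSum P_E 1)
    -- under `P_O`, `T = T^O` with probability one
    (hTTo : ∀ (y : 𝒴) (t t' : Bool) (x : 𝒳), t ≠ t' → P_O (y, t, t', x) = 0)
    -- Positivity
    (hposE : 0 < mT P_E true ∧ mT P_E true < 1)
    (hposO : ∀ x : 𝒳, 0 < mX P_O x →
      0 < mToX P_O true x / mX P_O x ∧ mToX P_O true x / mX P_O x < 1)
    -- Extended randomization: `T ⫫ (T^O, X)` under `P_E`
    (hrand : ∀ (t t' : Bool) (x : 𝒳), mTToX P_E t t' x = mT P_E t * mToX P_E t' x)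
    -- Conditional ignorability: `Y ⫫ T^O ∣ (T, X)` under `P_E` (cross-multiplied form)
    (hign : ∀ (y : 𝒴) (t t' : Bool) (x : 𝒳),
      P_E (y, t, t', x) * mTX P_E t x = mYTX P_E y t x * mTToX P_E t t' x)
    -- Extended modularity (cross-multiplied forms)
    (hmodY : ∀ (y : 𝒴) (t : Bool) (x : 𝒳),
      mYTX P_E y t x * mTX P_O t x = mYTX P_O y t x * mTX P_E t x)
    (hmodTo : ∀ (t' : Bool) (x : 𝒳),
      mToX P_E t' x * mX P_O x = mToX P_O t' x * mX P_E x)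
    (hmodX : ∀ x : 𝒳, mX P_E x = mX P_O x) :
    ∀ (t : Bool) (y : 𝒴),
      mYTTo P_E y t true / mTTo P_E t true
        = ∑' x : 𝒳, (mYTX P_O y t x / mTX P_O t x) * (mToX P_O true x / mTo P_O true) := by
  intro t y
  have hsO : Summable P_O := hO_sum.summable
  have hsE : Summable P_E := hE_sum.summable
  have htot : mT P_E false + mT P_E true = 1 := by
    rw [total_eq P_E hsE, hE_sum.tsum_eq]
  have hmT : 0 < mT P_E t := by
    cases t
    · linarith [hposE.2]
    · exact hposE.1
  have hmT' : mT P_E t ≠ 0 := ne_of_gt hmT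
  -- mTToX P_O vanishes off the diagonal
  have hTToX0 : ∀ (a b : Bool) (x : 𝒳), a ≠ b → mTToX P_O a b x = 0 := by
    intro a b x hab
    unfold mTToX
    calc (∑' y : 𝒴, P_O (y, a, b, x)) = ∑' _ : 𝒴, (0 : ℝ) :=
          tsum_congr fun y => hTTo y a b x hab
      _ = 0 := tsum_zero
  have hTX_TO : ∀ (a : Bool) (x : 𝒳), mTX P_O a x = mToX P_O a x := by
    intro a x
    rw [mTX_eq P_O hsO, mToX_eq P_O hsO]
    cases a
    · rw [hTToX0 false true x (by simp), hTToX0 true false x (by simp)]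
    · rw [hTToX0 true false x (by simp), hTToX0 false true x (by simp)]
  -- mToX agreement
  have hToX : ∀ x : 𝒳, mToX P_E true x = mToX P_O true x := by
    intro x
    by_cases h : mX P_O x = 0
    · have hE0 : mX P_E x = 0 := by rw [hmodX]; exact h
      have h1 : mToX P_E true x = 0 :=
        le_antisymm (hE0 ▸ mToX_le_mX P_E hsE hE_nonneg true x) (mToX_nonneg P_E hE_nonneg true x)
      have h2 : mToX P_O true x = 0 :=
        le_antisymm (h ▸ mToX_le_mX P_O hsO hO_nonneg true x) (mToX_nonneg P_O hO_nonneg true x)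
      rw [h1, h2]
    · have hmt := hmodTo true x
      rw [hmodX] at hmt
      exact mul_right_cancel₀ h hmt
  have hTXE : ∀ x : 𝒳, mTX P_E t x = mT P_E t * mX P_E x := by
    intro x
    rw [mTX_eq P_E hsE, mX_eqTo P_E hsE, hrand, hrand]
    ring
  -- pointwise key identity
  have key : ∀ x : 𝒳, P_E (y, t, true, x)
      = mT P_E t * ((mYTX P_O y t x / mTX P_O t x) * mToX P_O true x) := by
    intro x
    by_cases h : mX P_O x = 0
    · have hE0 : mX P_E x = 0 := by rw [hmodX]; exact h
      have hP0 : P_E (y, t, true, x) = 0 :=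
        le_antisymm (hE0 ▸ P_le_mX P_E hsE hE_nonneg y t true x) (hE_nonneg _)
      have hTo0 : mToX P_O true x = 0 :=
        le_antisymm (h ▸ mToX_le_mX P_O hsO hO_nonneg true x) (mToX_nonneg P_O hO_nonneg true x)
      rw [hP0, hTo0, mul_zero, mul_zero]
    · have hm : 0 < mX P_O x := lt_of_le_of_ne (mX_nonneg P_O hO_nonneg x) (Ne.symm h)
      obtain ⟨hr1, hr2⟩ := hposO x hm
      have ha1 : 0 < mToX P_O true x := by
        have := mul_pos hr1 hm
        rwa [div_mul_cancel₀ _ h] at this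
      have ha0 : 0 < mToX P_O false x := by
        have hlt : mToX P_O true x < mX P_O x := (div_lt_one hm).mp hr2
        have hmx := mX_eqTo P_O hsO x
        linarith
      have hTXOpos : 0 < mTX P_O t x := by
        rw [hTX_TO t x]
        cases t
        · exact ha0
        · exact ha1
      have hTXO' : mTX P_O t x ≠ 0 := ne_of_gt hTXOpos
      have e1 : mTX P_E t x = mT P_E t * mX P_O x := by rw [hTXE x, hmodX]
      have e3 : mTToX P_E t true x = mT P_E t * mToX P_O true x := by
        rw [hrand, hToX x]
      have h5 := hign y t true x
      rw [e1, e3] at h5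
      have h6 := hmodY y t x
      rw [e1] at h6
      have h7 : P_E (y, t, true, x) * mTX P_O t x * (mT P_E t * mX P_O x)
          = mT P_E t * (mYTX P_O y t x * mToX P_O true x) * (mT P_E t * mX P_O x) := by
        linear_combination mTX P_O t x * h5 + (mT P_E t * mToX P_O true x) * h6
      have h8 := mul_right_cancel₀ (mul_ne_zero hmT' h) h7
      field_simp [hTXO']
      linear_combination h8
  -- aggregate numerator and denominator
  have hnum : mYTTo P_E y t true
      = mT P_E t * ∑' x : 𝒳, (mYTX P_O y t x / mTX P_O t x) * mToX P_O true x := by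
    calc mYTTo P_E y t true
        = ∑' x : 𝒳, mT P_E t * ((mYTX P_O y t x / mTX P_O t x) * mToX P_O true x) :=
          tsum_congr key
      _ = mT P_E t * ∑' x : 𝒳, (mYTX P_O y t x / mTX P_O t x) * mToX P_O true x :=
          tsum_mul_left
  have hden : mTTo P_E t true = mT P_E t * mTo P_O true := by
    rw [mTTo_eq P_E hsE, mTo_eq P_O hsO]
    calc (∑' x : 𝒳, mTToX P_E t true x)
        = ∑' x : 𝒳, mT P_E t * mToX P_O true x :=
          tsum_congr fun x => by rw [hrand, hToX x]
      _ = mT P_E t * ∑' x : 𝒳, mToX P_O true x := tsum_mul_left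
  rw [hnum, hden, mul_div_mul_left _ _ hmT', ← tsum_div_const]
  exact tsum_congr fun x => mul_div_assoc _ _ _

end
end

section
/- Under the extended positivity, extended randomization, conditional ignorability and extended modularity assumptions (with modularity of the conditional law of a real-valued outcome Y given (T,X)), the average treatment effect on the treated is identified as: E_{P_E}[Y | T=1, T^O=1] − E_{P_E}[Y | T=0, T^O=1] = Σ_x ( E_{P_O}[Y | T=1, X=x] − E_{P_O}[Y | T=0, X=x] ) · P_O(X=x | T^O=1), the sum ranging over x with P_O(X=x, T^O=1) > 0. -/
/-!
Extended real-outcome target-trial setup: `(Ω, 𝓕)` carries probability measures `P_O`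
(observational regime) and `P_E` (experimental regime), an integrable real outcome `Y`,
an administered treatment `T : Ω → Bool`, a natural treatment assignment `To : Ω → Bool`
(denoting `T^O`), and covariates `X : Ω → 𝒳` with `𝒳` countable; under `P_O` the event
`{T = T^O}` has probability 1.
STATEMENT 7: Under extended positivity, extended randomization, conditional ignorability and
extended modularity, the average treatment effect on the treated is identified:
`E_{P_E}[Y | T=1, T^O=1] − E_{P_E}[Y | T=0, T^O=1]
  = ∑_x (E_{P_O}[Y | T=1, X=x] − E_{P_O}[Y | T=0, X=x]) · P_O(X=x | T^O=1)`.
(Terms with `P_O(X=x, T^O=1) = 0` vanish, so the sum effectively ranges over `x` with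
`P_O(X=x, T^O=1) > 0`.)
-/

open MeasureTheory
open scoped BigOperators ENNReal

noncomputable section

/-- From a cross-multiplied distributional equality we get a cross-multiplied
integral equality. -/
lemma aux_integral_eq {Ω : Type*} [MeasurableSpace Ω] (μ ν : Measure Ω) (Y : Ω → ℝ)
    (hY : Measurable Y) (A A' : Set Ω) (c c' : ℝ≥0∞)
    (h : ∀ B : Set ℝ, MeasurableSet B → c' * μ (Y ⁻¹' B ∩ A) = c * ν (Y ⁻¹' B ∩ A')) :
    c'.toReal * ∫ ω in A, Y ω ∂μ = c.toReal * ∫ ω in A', Y ω ∂ν := by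
  have hmap : c' • (μ.restrict A).map Y = c • (ν.restrict A').map Y := by
    ext B hB
    simp only [Measure.smul_apply, smul_eq_mul, Measure.map_apply hY hB,
      Measure.restrict_apply (hY hB)]
    exact h B hB
  have hmi : ∀ ρ : Measure Ω, ∫ x, x ∂(ρ.map Y) = ∫ ω, Y ω ∂ρ := fun ρ =>
    integral_map hY.aemeasurable measurable_id.aestronglyMeasurable
  have h1 : ∫ x, x ∂(c' • (μ.restrict A).map Y) = c'.toReal * ∫ ω in A, Y ω ∂μ := by
    rw [integral_smul_measure, hmi, smul_eq_mul]
  have h2 : ∫ x, x ∂(c • (ν.restrict A').map Y) = c.toReal * ∫ ω in A', Y ω ∂ν := by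
    rw [integral_smul_measure, hmi, smul_eq_mul]
  rw [← h1, ← h2, hmap]


theorem att_identification
    {Ω : Type*} [MeasurableSpace Ω]
    {𝒳 : Type*} [Countable 𝒳] [MeasurableSpace 𝒳] [MeasurableSingletonClass 𝒳]
    (P_O P_E : Measure Ω) [IsProbabilityMeasure P_O] [IsProbabilityMeasure P_E]
    (Y : Ω → ℝ) (T To : Ω → Bool) (X : Ω → 𝒳)
    (hY : Measurable Y) (hT : Measurable T) (hTo : Measurable To) (hX : Measurable X)
    (hYintO : Integrable Y P_O) (hYintE : Integrable Y P_E)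
    -- under `P_O`, `T = T^O` with probability one
    (hTTo : P_O {ω | T ω = To ω} = 1)
    -- Positivity: `0 < P_E(T=1) < 1`
    (hposE : 0 < P_E {ω | T ω = true} ∧ P_E {ω | T ω = true} < 1)
    -- Positivity: `0 < P_O(T^O=1 | X=x) < 1` whenever `P_O(X=x) > 0`
    (hposO : ∀ x : 𝒳, 0 < P_O {ω | X ω = x} →
      0 < P_O {ω | To ω = true ∧ X ω = x} ∧
        P_O {ω | To ω = true ∧ X ω = x} < P_O {ω | X ω = x})
    -- Extended randomization: `T ⫫ (T^O, X)` under `P_E`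
    (hrand : ∀ (t t' : Bool) (x : 𝒳),
      P_E {ω | T ω = t ∧ To ω = t' ∧ X ω = x}
        = P_E {ω | T ω = t} * P_E {ω | To ω = t' ∧ X ω = x})
    -- Conditional ignorability: the conditional law of `Y` given `(T, X, T^O)` under `P_E`
    -- does not depend on `T^O` (cross-multiplied form)
    (hign : ∀ B : Set ℝ, MeasurableSet B → ∀ (t : Bool) (x : 𝒳),
      P_E {ω | Y ω ∈ B ∧ T ω = t ∧ X ω = x ∧ To ω = true}
          * P_E {ω | T ω = t ∧ X ω = x ∧ To ω = false}
        = P_E {ω | Y ω ∈ B ∧ T ω = t ∧ X ω = x ∧ To ω = false}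
          * P_E {ω | T ω = t ∧ X ω = x ∧ To ω = true})
    -- Extended modularity (cross-multiplied forms)
    (hmodY : ∀ B : Set ℝ, MeasurableSet B → ∀ (t : Bool) (x : 𝒳),
      P_E {ω | Y ω ∈ B ∧ T ω = t ∧ X ω = x} * P_O {ω | T ω = t ∧ X ω = x}
        = P_O {ω | Y ω ∈ B ∧ T ω = t ∧ X ω = x} * P_E {ω | T ω = t ∧ X ω = x})
    (hmodTo : ∀ (t' : Bool) (x : 𝒳),
      P_E {ω | To ω = t' ∧ X ω = x} * P_O {ω | X ω = x}
        = P_O {ω | To ω = t' ∧ X ω = x} * P_E {ω | X ω = x})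
    (hmodX : ∀ x : 𝒳, P_E {ω | X ω = x} = P_O {ω | X ω = x}) :
    (∫ ω in {ω | T ω = true ∧ To ω = true}, Y ω ∂P_E)
        / (P_E {ω | T ω = true ∧ To ω = true}).toReal
      - (∫ ω in {ω | T ω = false ∧ To ω = true}, Y ω ∂P_E)
        / (P_E {ω | T ω = false ∧ To ω = true}).toReal
    = ∑' x : 𝒳,
        ((∫ ω in {ω | T ω = true ∧ X ω = x}, Y ω ∂P_O)
            / (P_O {ω | T ω = true ∧ X ω = x}).toReal
          - (∫ ω in {ω | T ω = false ∧ X ω = x}, Y ω ∂P_O)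
            / (P_O {ω | T ω = false ∧ X ω = x}).toReal)
        * ((P_O {ω | X ω = x ∧ To ω = true}).toReal
            / (P_O {ω | To ω = true}).toReal) := by
  -- basic measurability
  have hmT : ∀ t : Bool, MeasurableSet {ω | T ω = t} :=
    fun t => hT (measurableSet_singleton t)
  have hmTo : ∀ t : Bool, MeasurableSet {ω | To ω = t} :=
    fun t => hTo (measurableSet_singleton t)
  have hmX : ∀ x : 𝒳, MeasurableSet {ω | X ω = x} :=
    fun x => hX (measurableSet_singleton x)
  have hmTXTo : ∀ (t : Bool) (x : 𝒳) (t' : Bool),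
      MeasurableSet {ω | T ω = t ∧ X ω = x ∧ To ω = t'} := by
    intro t x t'
    exact (hmT t).inter ((hmX x).inter (hmTo t'))
  have hmTX : ∀ (t : Bool) (x : 𝒳), MeasurableSet {ω | T ω = t ∧ X ω = x} :=
    fun t x => (hmT t).inter (hmX x)
  have hmToX : ∀ (t' : Bool) (x : 𝒳), MeasurableSet {ω | To ω = t' ∧ X ω = x} :=
    fun t' x => (hmTo t').inter (hmX x)
  -- `T = To` a.e. under `P_O`
  have hmeq : MeasurableSet {ω | T ω = To ω} := by
    have : {ω | T ω = To ω}
        = ({ω | T ω = true} ∩ {ω | To ω = true}) ∪ ({ω | T ω = false} ∩ {ω | To ω = false}) := by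
      ext ω
      rcases Bool.dichotomy (T ω) with h | h <;> rcases Bool.dichotomy (To ω) with h' | h' <;>
        simp [h, h', Set.mem_setOf_eq]
    rw [this]
    exact ((hmT true).inter (hmTo true)).union ((hmT false).inter (hmTo false))
  have hae : ∀ᵐ ω ∂P_O, T ω = To ω := by
    rw [ae_iff]
    have : {ω | ¬ T ω = To ω} = {ω | T ω = To ω}ᶜ := rfl
    rw [this, measure_compl hmeq (measure_ne_top _ _), hTTo, measure_univ, tsub_self]
  -- F4 : marginals of (To, X) agree
  have hToXeq : ∀ (t' : Bool) (x : 𝒳),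
      P_E {ω | To ω = t' ∧ X ω = x} = P_O {ω | To ω = t' ∧ X ω = x} := by
    intro t' x
    rcases eq_or_ne (P_O {ω | X ω = x}) 0 with h0 | h0
    · have hE0 : P_E {ω | X ω = x} = 0 := (hmodX x).trans h0
      have sub : {ω | To ω = t' ∧ X ω = x} ⊆ {ω | X ω = x} := fun ω h => h.2
      rw [measure_mono_null sub h0, measure_mono_null sub hE0]
    · have h := hmodTo t' x
      rw [hmodX x] at h
      have hfin : P_O {ω | X ω = x} ≠ ∞ := measure_ne_top _ _
      have e1 : P_E {ω | To ω = t' ∧ X ω = x}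
          = (P_O {ω | X ω = x}) * (P_O {ω | To ω = t' ∧ X ω = x}) / P_O {ω | X ω = x} :=
        (ENNReal.eq_div_iff h0 hfin).mpr (by rw [← mul_comm (P_O {ω | To ω = t' ∧ X ω = x}), ← h, mul_comm])
      have e2 : P_O {ω | To ω = t' ∧ X ω = x}
          = (P_O {ω | X ω = x}) * (P_O {ω | To ω = t' ∧ X ω = x}) / P_O {ω | X ω = x} :=
        (ENNReal.eq_div_iff h0 hfin).mpr rfl
      rw [e1, ← e2]
  -- split of {X = x} along To
  have hXsplit : ∀ x : 𝒳, P_O {ω | X ω = x}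
      = P_O {ω | To ω = true ∧ X ω = x} + P_O {ω | To ω = false ∧ X ω = x} := by
    intro x
    have hu : {ω | To ω = true ∧ X ω = x} ∪ {ω | To ω = false ∧ X ω = x} = {ω | X ω = x} := by
      ext ω
      rcases Bool.dichotomy (To ω) with h | h <;> simp [h, Set.mem_setOf_eq]
    have hd : Disjoint {ω | To ω = true ∧ X ω = x} {ω | To ω = false ∧ X ω = x} := by
      rw [Set.disjoint_left]
      rintro ω ⟨h1, -⟩ ⟨h2, -⟩
      simp [h1] at h2
    rw [← hu, measure_union hd (hmToX false x)]
  -- positivity of P_O(To = t ∧ X = x) for both t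
  have hbO : ∀ (t : Bool) (x : 𝒳), P_O {ω | X ω = x} ≠ 0 →
      P_O {ω | To ω = t ∧ X ω = x} ≠ 0 := by
    intro t x hx
    have hpos := hposO x (pos_iff_ne_zero.mpr hx)
    cases t
    · intro h0
      rw [hXsplit x, h0, add_zero] at hpos
      exact absurd hpos.2 (lt_irrefl _)
    · exact hpos.1.ne'
  -- under P_O, events in T equal events in To
  have hTeq : ∀ (t : Bool) (x : 𝒳),
      P_O {ω | T ω = t ∧ X ω = x} = P_O {ω | To ω = t ∧ X ω = x} := by
    intro t x
    apply measure_congr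
    filter_upwards [hae] with ω h
    change (T ω = t ∧ X ω = x) = (To ω = t ∧ X ω = x)
    rw [h]
  have hbpos : ∀ (t : Bool) (x : 𝒳), P_O {ω | X ω = x} ≠ 0 →
      P_O {ω | T ω = t ∧ X ω = x} ≠ 0 := by
    intro t x hx
    rw [hTeq t x]; exact hbO t x hx
  -- joint law of (T, X, To = true) under P_E
  have ha1 : ∀ (t : Bool) (t' : Bool) (x : 𝒳),
      P_E {ω | T ω = t ∧ X ω = x ∧ To ω = t'}
        = P_E {ω | T ω = t} * P_O {ω | To ω = t' ∧ X ω = x} := by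
    intro t t' x
    have hset : {ω | T ω = t ∧ X ω = x ∧ To ω = t'} = {ω | T ω = t ∧ To ω = t' ∧ X ω = x} := by
      ext ω; exact ⟨fun ⟨h1, h2, h3⟩ => ⟨h1, h3, h2⟩, fun ⟨h1, h2, h3⟩ => ⟨h1, h3, h2⟩⟩
    rw [hset, hrand t t' x, hToXeq t' x]
  -- P_E of {T = t ∧ X = x}
  have haE : ∀ (t : Bool) (x : 𝒳),
      P_E {ω | T ω = t ∧ X ω = x} = P_E {ω | T ω = t} * P_O {ω | X ω = x} := by
    intro t x
    have hu : {ω | T ω = t ∧ X ω = x ∧ To ω = true} ∪ {ω | T ω = t ∧ X ω = x ∧ To ω = false}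
        = {ω | T ω = t ∧ X ω = x} := by
      ext ω
      rcases Bool.dichotomy (To ω) with h | h <;> simp [h, Set.mem_setOf_eq]
    have hd : Disjoint {ω | T ω = t ∧ X ω = x ∧ To ω = true}
        {ω | T ω = t ∧ X ω = x ∧ To ω = false} := by
      rw [Set.disjoint_left]
      rintro ω ⟨-, -, h1⟩ ⟨-, -, h2⟩
      simp [h1] at h2
    rw [← hu, measure_union hd (hmTXTo t x false), ha1 t true x, ha1 t false x,
      ← mul_add, ← hXsplit x]
  -- positivity of the treated groups under P_E
  have hpt : P_E {ω | T ω = true} ≠ 0 := hposE.1.ne'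
  have hpf : P_E {ω | T ω = false} ≠ 0 := by
    have hc : {ω | T ω = false} = {ω | T ω = true}ᶜ := by
      ext ω; rcases Bool.dichotomy (T ω) with h | h <;> simp [h, Set.mem_setOf_eq]
    rw [hc, measure_compl (hmT true) (measure_ne_top _ _), measure_univ]
    intro h
    have := tsub_eq_zero_iff_le.mp h
    exact absurd hposE.2 (not_lt.mpr this)
  -- positivity of P_O(To = true)
  have hMne : P_O {ω | To ω = true} ≠ 0 := by
    have hex : ∃ x : 𝒳, P_O {ω | X ω = x} ≠ 0 := by
      by_contra hno
      push_neg at hno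
      have huniv : (⋃ x : 𝒳, {ω | X ω = x}) = Set.univ := by
        ext ω; simp only [Set.mem_iUnion, Set.mem_setOf_eq, Set.mem_univ, iff_true]
        exact ⟨X ω, rfl⟩
      have := measure_iUnion_null (μ := P_O) (s := fun x : 𝒳 => {ω | X ω = x}) hno
      rw [huniv, measure_univ] at this
      exact one_ne_zero this
    obtain ⟨x0, hx0⟩ := hex
    intro h0
    exact hbO true x0 hx0 (measure_mono_null (fun ω h => h.1) h0)
  -- key per-regime identity
  have key : ∀ t : Bool, P_E {ω | T ω = t} ≠ 0 →
      HasSum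
        (fun x : 𝒳 => ((∫ ω in {ω | T ω = t ∧ X ω = x}, Y ω ∂P_O)
            / (P_O {ω | T ω = t ∧ X ω = x}).toReal)
          * ((P_O {ω | To ω = true ∧ X ω = x}).toReal / (P_O {ω | To ω = true}).toReal))
        ((∫ ω in {ω | T ω = t ∧ To ω = true}, Y ω ∂P_E)
          / (P_E {ω | T ω = t ∧ To ω = true}).toReal) := by
    intro t ht
    have hptr : (P_E {ω | T ω = t}).toReal ≠ 0 :=
      ENNReal.toReal_ne_zero.mpr ⟨ht, measure_ne_top _ _⟩
    have hMr : (P_O {ω | To ω = true}).toReal ≠ 0 :=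
      ENNReal.toReal_ne_zero.mpr ⟨hMne, measure_ne_top _ _⟩
    -- per-x identity (F5)
    have hterm : ∀ x : 𝒳,
        (∫ ω in {ω | T ω = t ∧ X ω = x ∧ To ω = true}, Y ω ∂P_E)
          = ((∫ ω in {ω | T ω = t ∧ X ω = x}, Y ω ∂P_O)
              / (P_O {ω | T ω = t ∧ X ω = x}).toReal)
            * (P_E {ω | T ω = t}).toReal * (P_O {ω | To ω = true ∧ X ω = x}).toReal := by
      intro x
      rcases eq_or_ne (P_O {ω | X ω = x}) 0 with h0 | h0
      · -- degenerate case: everything vanishes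
        have hm0 : P_O {ω | To ω = true ∧ X ω = x} = 0 :=
          measure_mono_null (fun ω h => h.2) h0
        have hE0 : P_E {ω | T ω = t ∧ X ω = x ∧ To ω = true} = 0 :=
          measure_mono_null (fun ω h => h.2.1) ((hmodX x).trans h0)
        rw [setIntegral_measure_zero _ hE0, hm0]
        simp
      · -- main case
        set I1 := ∫ ω in {ω | T ω = t ∧ X ω = x ∧ To ω = true}, Y ω ∂P_E with hI1
        set I0 := ∫ ω in {ω | T ω = t ∧ X ω = x ∧ To ω = false}, Y ω ∂P_E with hI0
        set J := ∫ ω in {ω | T ω = t ∧ X ω = x}, Y ω ∂P_E with hJ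
        set K := ∫ ω in {ω | T ω = t ∧ X ω = x}, Y ω ∂P_O with hK
        set a1 := P_E {ω | T ω = t ∧ X ω = x ∧ To ω = true} with ha1d
        set a0 := P_E {ω | T ω = t ∧ X ω = x ∧ To ω = false} with ha0d
        set A := P_E {ω | T ω = t ∧ X ω = x} with hAd
        set b := P_O {ω | T ω = t ∧ X ω = x} with hbd
        -- step 1 : ignorability
        have step1 : a0.toReal * I1 = a1.toReal * I0 := by
          apply aux_integral_eq P_E P_E Y hY _ _ a1 a0
          intro B hB
          rw [mul_comm a0, mul_comm a1]
          exact hign B hB t x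
        -- splits
        have hu : {ω | T ω = t ∧ X ω = x ∧ To ω = true} ∪ {ω | T ω = t ∧ X ω = x ∧ To ω = false}
            = {ω | T ω = t ∧ X ω = x} := by
          ext ω
          rcases Bool.dichotomy (To ω) with h | h <;> simp [h, Set.mem_setOf_eq]
        have hd : Disjoint {ω | T ω = t ∧ X ω = x ∧ To ω = true}
            {ω | T ω = t ∧ X ω = x ∧ To ω = false} := by
          rw [Set.disjoint_left]
          rintro ω ⟨-, -, h1⟩ ⟨-, -, h2⟩
          simp [h1] at h2
        have hAsplit : A = a1 + a0 := by
          rw [hAd, ← hu, measure_union hd (hmTXTo t x false)]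
        have hJsplit : J = I1 + I0 := by
          rw [hJ, ← hu, setIntegral_union hd (hmTXTo t x false)
            hYintE.integrableOn hYintE.integrableOn]
        have hArsplit : A.toReal = a1.toReal + a0.toReal := by
          rw [hAsplit, ENNReal.toReal_add (measure_ne_top _ _) (measure_ne_top _ _)]
        -- step 2
        have step2 : I1 * A.toReal = J * a1.toReal := by
          rw [hArsplit, hJsplit]
          linear_combination step1
        -- step 3 : modularity
        have step3 : b.toReal * J = A.toReal * K := by
          apply aux_integral_eq P_E P_O Y hY _ _ A b
          intro B hB
          rw [mul_comm b, mul_comm A]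
          exact hmodY B hB t x
        -- measure identities
        have hA : A = P_E {ω | T ω = t} * P_O {ω | X ω = x} := haE t x
        have ha1' : a1 = P_E {ω | T ω = t} * P_O {ω | To ω = true ∧ X ω = x} := ha1 t true x
        have hbne : b.toReal ≠ 0 :=
          ENNReal.toReal_ne_zero.mpr ⟨hbpos t x h0, measure_ne_top _ _⟩
        have hAr : A.toReal
            = (P_E {ω | T ω = t}).toReal * (P_O {ω | X ω = x}).toReal := by
          rw [hA, ENNReal.toReal_mul]
        have hxr : (P_O {ω | X ω = x}).toReal ≠ 0 :=
          ENNReal.toReal_ne_zero.mpr ⟨h0, measure_ne_top _ _⟩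
        have hAne : A.toReal ≠ 0 := by
          rw [hAr]; exact mul_ne_zero hptr hxr
        have ha1r : a1.toReal
            = (P_E {ω | T ω = t}).toReal * (P_O {ω | To ω = true ∧ X ω = x}).toReal := by
          rw [ha1', ENNReal.toReal_mul]
        -- conclude
        have hgoal : I1 * (b.toReal * A.toReal)
            = (K / b.toReal * a1.toReal) * (b.toReal * A.toReal) := by
          have hr : K / b.toReal * b.toReal = K := div_mul_cancel₀ K hbne
          linear_combination b.toReal * step2 + a1.toReal * step3
            - a1.toReal * A.toReal * hr
        have := mul_right_cancel₀ (mul_ne_zero hbne hAne) hgoal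
        rw [this, ha1r]
        ring
    -- partition of the treated-and-assigned event by X
    have hmS : ∀ x : 𝒳, MeasurableSet {ω | T ω = t ∧ X ω = x ∧ To ω = true} :=
      fun x => hmTXTo t x true
    have hdS : Pairwise (Function.onFun Disjoint fun x : 𝒳 => {ω | T ω = t ∧ X ω = x ∧ To ω = true}) := by
      intro x y hxy
      rw [Function.onFun, Set.disjoint_left]
      rintro ω ⟨-, h1, -⟩ ⟨-, h2, -⟩
      exact hxy (h1.symm.trans h2)
    have hUS : (⋃ x : 𝒳, {ω | T ω = t ∧ X ω = x ∧ To ω = true})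
        = {ω | T ω = t ∧ To ω = true} := by
      ext ω
      simp only [Set.mem_iUnion, Set.mem_setOf_eq]
      exact ⟨fun ⟨x, h1, _, h3⟩ => ⟨h1, h3⟩, fun ⟨h1, h3⟩ => ⟨X ω, h1, rfl, h3⟩⟩
    have hN : HasSum (fun x : 𝒳 => ∫ ω in {ω | T ω = t ∧ X ω = x ∧ To ω = true}, Y ω ∂P_E)
        (∫ ω in {ω | T ω = t ∧ To ω = true}, Y ω ∂P_E) := by
      have := hasSum_integral_iUnion hmS hdS (hYintE.integrableOn)
      rwa [hUS] at this
    -- denominator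
    have hMsplit : P_O {ω | To ω = true} = ∑' x : 𝒳, P_O {ω | To ω = true ∧ X ω = x} := by
      have hu : (⋃ x : 𝒳, {ω | To ω = true ∧ X ω = x}) = {ω | To ω = true} := by
        ext ω
        simp only [Set.mem_iUnion, Set.mem_setOf_eq]
        exact ⟨fun ⟨x, h1, _⟩ => h1, fun h1 => ⟨X ω, h1, rfl⟩⟩
      have hd : Pairwise (Function.onFun Disjoint fun x : 𝒳 => {ω | To ω = true ∧ X ω = x}) := by
        intro x y hxy
        rw [Function.onFun, Set.disjoint_left]
        rintro ω ⟨-, h1⟩ ⟨-, h2⟩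
        exact hxy (h1.symm.trans h2)
      rw [← hu, measure_iUnion hd fun x => hmToX true x]
    have hD : P_E {ω | T ω = t ∧ To ω = true}
        = P_E {ω | T ω = t} * P_O {ω | To ω = true} := by
      rw [← hUS, measure_iUnion hdS hmS]
      calc ∑' x : 𝒳, P_E {ω | T ω = t ∧ X ω = x ∧ To ω = true}
          = ∑' x : 𝒳, P_E {ω | T ω = t} * P_O {ω | To ω = true ∧ X ω = x} := by
            exact tsum_congr fun x => ha1 t true x
        _ = P_E {ω | T ω = t} * ∑' x : 𝒳, P_O {ω | To ω = true ∧ X ω = x} :=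
            ENNReal.tsum_mul_left
        _ = P_E {ω | T ω = t} * P_O {ω | To ω = true} := by rw [← hMsplit]
    have hDr : (P_E {ω | T ω = t ∧ To ω = true}).toReal
        = (P_E {ω | T ω = t}).toReal * (P_O {ω | To ω = true}).toReal := by
      rw [hD, ENNReal.toReal_mul]
    -- assemble
    have hfinal := hN.div_const ((P_E {ω | T ω = t}).toReal * (P_O {ω | To ω = true}).toReal)
    have hfun : (fun x : 𝒳 => (∫ ω in {ω | T ω = t ∧ X ω = x ∧ To ω = true}, Y ω ∂P_E)
          / ((P_E {ω | T ω = t}).toReal * (P_O {ω | To ω = true}).toReal))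
        = fun x : 𝒳 => ((∫ ω in {ω | T ω = t ∧ X ω = x}, Y ω ∂P_O)
            / (P_O {ω | T ω = t ∧ X ω = x}).toReal)
          * ((P_O {ω | To ω = true ∧ X ω = x}).toReal / (P_O {ω | To ω = true}).toReal) := by
      funext x
      rw [hterm x, mul_assoc, mul_div_assoc, mul_div_mul_left _ _ hptr]
    rw [hfun] at hfinal
    rwa [hDr]
  -- combine the two regimes
  have h1 := key true hpt
  have h0 := key false hpf
  have hsub := h1.sub h0
  rw [← hsub.tsum_eq]
  apply tsum_congr
  intro x
  have hset : {ω | X ω = x ∧ To ω = true} = {ω | To ω = true ∧ X ω = x} := by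
    ext ω; exact ⟨fun ⟨h1, h2⟩ => ⟨h2, h1⟩, fun ⟨h1, h2⟩ => ⟨h2, h1⟩⟩
  rw [hset, sub_mul]


end
end

section
/- Conditional ignorability together with distributional consistency implies outcome modularity: if under P_E the outcome Y is conditionally independent of T^O given (T, X), and if for each t ∈ {0,1} the distributional consistency identity P_E(X=x, Y=y | T^O=t, T=t) = P_O(X=x, Y=y | T=t) holds for all x, y (the conditioning events having positive mass), then P_E(Y=y | T=t, X=x) = P_O(Y=y | T=t, X=x) for every t, x, y such that P_E(T=t, X=x) > 0 and P_O(T=t, X=x) > 0. -/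
/-!
Extended discrete target-trial setup: `P_O` and `P_E` are probability mass functions on
`𝒴 × Bool × Bool × 𝒳` with coordinates `(Y, T, T^O, X)`; under `P_O` the event `{T = T^O}`
has probability 1.
STATEMENT 9: Conditional ignorability together with distributional consistency implies
outcome modularity: if `Y ⫫ T^O ∣ (T, X)` under `P_E` and for each `t`
`P_E(X=x, Y=y | T^O=t, T=t) = P_O(X=x, Y=y | T=t)` for all `x, y`
(the conditioning events having positive mass), then
`P_E(Y=y | T=t, X=x) = P_O(Y=y | T=t, X=x)` whenever
`P_E(T=t, X=x) > 0` and `P_O(T=t, X=x) > 0`.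
We additionally assume `P_E(T^O=t, T=t, X=x) > 0` whenever `P_E(T=t, X=x) > 0`,
so the intermediate conditioning is well-defined.
-/

open scoped BigOperators

noncomputable section

variable {𝒴 𝒳 : Type*} [Countable 𝒴] [Countable 𝒳]

theorem ignorability_and_distributional_consistency_imply_modularity
    (P_O P_E : 𝒴 × Bool × Bool × 𝒳 → ℝ)
    (hO_nonneg : ∀ z, 0 ≤ P_O z) (hO_sum : HasSum P_O 1)
    (hE_nonneg : ∀ z, 0 ≤ P_E z) (hE_sum : HasSum P_E 1)
    -- under `P_O`, `T = T^O` with probability one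
    (hTTo : ∀ (y : 𝒴) (t t' : Bool) (x : 𝒳), t ≠ t' → P_O (y, t, t', x) = 0)
    -- the intermediate conditioning is well-defined
    (hwell : ∀ (t : Bool) (x : 𝒳), 0 < mTX P_E t x → 0 < mTToX P_E t t x)
    -- Conditional ignorability: `Y ⫫ T^O ∣ (T, X)` under `P_E` (cross-multiplied form)
    (hign : ∀ (y : 𝒴) (t t' : Bool) (x : 𝒳),
      P_E (y, t, t', x) * mTX P_E t x = mYTX P_E y t x * mTToX P_E t t' x)
    -- the conditioning events of the distributional consistency identity have positive mass
    (hposE : ∀ t : Bool, 0 < mTTo P_E t t)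
    (hposO : ∀ t : Bool, 0 < mT P_O t)
    -- Distributional consistency: `P_E(X=x, Y=y | T^O=t, T=t) = P_O(X=x, Y=y | T=t)`
    (hdc : ∀ (t : Bool) (x : 𝒳) (y : 𝒴),
      P_E (y, t, t, x) / mTTo P_E t t = mYTX P_O y t x / mT P_O t) :
    ∀ (t : Bool) (x : 𝒳) (y : 𝒴),
      0 < mTX P_E t x → 0 < mTX P_O t x →
        mYTX P_E y t x / mTX P_E t x = mYTX P_O y t x / mTX P_O t x := by
  intro t x y hEtx hOtx
  have hA : 0 < mTToX P_E t t x := hwell t x hEtx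
  have hc : 0 < mTTo P_E t t := hposE t
  have hd : 0 < mT P_O t := hposO t
  -- summed distributional consistency
  have hsum : mTToX P_E t t x / mTTo P_E t t = mTX P_O t x / mT P_O t := by
    have h1 : mTToX P_E t t x / mTTo P_E t t
        = ∑' y : 𝒴, P_E (y, t, t, x) / mTTo P_E t t := tsum_div_const.symm
    have h2 : mTX P_O t x / mT P_O t
        = ∑' y : 𝒴, mYTX P_O y t x / mT P_O t := tsum_div_const.symm
    rw [h1, h2]
    exact tsum_congr fun y => hdc t x y
  have hA' : mTToX P_E t t x = mTTo P_E t t * (mTX P_O t x / mT P_O t) := by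
    field_simp at hsum ⊢
    linarith
  have hPE : P_E (y, t, t, x) = mTTo P_E t t * (mYTX P_O y t x / mT P_O t) := by
    have h := hdc t x y
    field_simp at h ⊢
    linarith
  have key : mYTX P_E y t x / mTX P_E t x = P_E (y, t, t, x) / mTToX P_E t t x := by
    rw [div_eq_div_iff hEtx.ne' hA.ne']
    have h := hign y t t x
    linarith
  rw [key, hPE, hA']
  field_simp

end
end

section
/- (Claim (I) in the proof of the extended g-formula theorem.) Suppose that under P_E the outcome Y is conditionally independent of T^O given (T, X), that P_E(Y=y | T=t, X=x) = P_O(Y=y | T=t, X=x) for all y, t, x (in cross-multiplied form), and that P_O({T = T^O}) = 1. Then Y is conditionally independent of the pair (T^O, regime) given (T, X): for all y, t, t', x with the relevant conditioning events of positive mass, P_E(Y=y | T=t, T^O=t', X=x) = P_O(Y=y | T=t, T^O=t', X=x) = P_O(Y=y | T=t, X=x). -/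
/-!
Extended discrete target-trial setup: `P_O` and `P_E` are probability mass functions on
`𝒴 × Bool × Bool × 𝒳` with coordinates `(Y, T, T^O, X)`; under `P_O` the event `{T = T^O}`
has probability 1.
STATEMENT 10 (Claim (I) in the proof of the extended g-formula theorem): if under `P_E` the
outcome `Y` is conditionally independent of `T^O` given `(T, X)`, if
`P_E(Y=y | T=t, X=x) = P_O(Y=y | T=t, X=x)` for all `y, t, x` (cross-multiplied form), and if
`P_O({T = T^O}) = 1`, then `Y` is conditionally independent of the pair `(T^O, regime)` given
`(T, X)`: for all `y, t, t', x` with the relevant conditioning events of positive mass,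
`P_E(Y=y | T=t, T^O=t', X=x) = P_O(Y=y | T=t, T^O=t', X=x) = P_O(Y=y | T=t, X=x)`.
-/

open scoped BigOperators

noncomputable section

variable {𝒴 𝒳 : Type*} [Countable 𝒴] [Countable 𝒳]

theorem claim_I_conditional_independence_of_outcome_from_natural_assignment_and_regime
    (P_O P_E : 𝒴 × Bool × Bool × 𝒳 → ℝ)
    (hO_nonneg : ∀ z, 0 ≤ P_O z) (hO_sum : HasSum P_O 1)
    (hE_nonneg : ∀ z, 0 ≤ P_E z) (hE_sum : HasSum P_E 1)
    -- under `P_O`, `T = T^O` with probability one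
    (hTTo : ∀ (y : 𝒴) (t t' : Bool) (x : 𝒳), t ≠ t' → P_O (y, t, t', x) = 0)
    -- Conditional ignorability: `Y ⫫ T^O ∣ (T, X)` under `P_E` (cross-multiplied form)
    (hign : ∀ (y : 𝒴) (t t' : Bool) (x : 𝒳),
      P_E (y, t, t', x) * mTX P_E t x = mYTX P_E y t x * mTToX P_E t t' x)
    -- Outcome modularity (cross-multiplied form):
    -- `P_E(Y=y | T=t, X=x) = P_O(Y=y | T=t, X=x)`
    (hmodY : ∀ (y : 𝒴) (t : Bool) (x : 𝒳),
      mYTX P_E y t x * mTX P_O t x = mYTX P_O y t x * mTX P_E t x) :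
    ∀ (y : 𝒴) (t t' : Bool) (x : 𝒳),
      0 < mTToX P_E t t' x → 0 < mTToX P_O t t' x → 0 < mTX P_O t x →
        P_E (y, t, t', x) / mTToX P_E t t' x = P_O (y, t, t', x) / mTToX P_O t t' x
        ∧ P_O (y, t, t', x) / mTToX P_O t t' x = mYTX P_O y t x / mTX P_O t x := by
  intro y t t' x hApos hBpos hCpos
  -- since mTToX P_O t t' x > 0 and P_O vanishes off the diagonal, t = t'
  have htt : t = t' := by
    by_contra h
    have hz : mTToX P_O t t' x = 0 := by
      unfold mTToX
      simp [hTTo _ _ _ _ h]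
    linarith
  subst htt
  -- summability of slices
  have hsE : ∀ (s s' : Bool), Summable (fun y : 𝒴 => P_E (y, s, s', x)) := by
    intro s s'
    exact hE_sum.summable.comp_injective (fun a b h => by simpa using h)
  have hsO : ∀ (s s' : Bool), Summable (fun y : 𝒴 => P_O (y, s, s', x)) := by
    intro s s'
    exact hO_sum.summable.comp_injective (fun a b h => by simpa using h)
  -- splitting the T^O sum
  have hTXE : mTX P_E t x = mTToX P_E t false x + mTToX P_E t true x := by
    unfold mTX mTToX
    rw [← Summable.tsum_add (hsE t false) (hsE t true)]
    exact tsum_congr fun y => tsum_bool _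
  have hTXO : mTX P_O t x = mTToX P_O t t x := by
    unfold mTX mTToX
    refine tsum_congr fun y => ?_
    rw [tsum_bool]
    cases t <;> simp [hTTo y false true x (by simp), hTTo y true false x (by simp)]
  have hYTXO : mYTX P_O y t x = P_O (y, t, t, x) := by
    unfold mYTX
    rw [tsum_bool]
    cases t <;> simp [hTTo y false true x (by simp), hTTo y true false x (by simp)]
  have hnn : ∀ (s s' : Bool), 0 ≤ mTToX P_E s s' x :=
    fun s s' => tsum_nonneg fun y => hE_nonneg _
  have hTXEpos : 0 < mTX P_E t x := by
    rw [hTXE]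
    cases t
    · have := hnn false true; linarith
    · have := hnn true false; linarith
  have eq1 : P_E (y, t, t, x) / mTToX P_E t t x = mYTX P_E y t x / mTX P_E t x := by
    rw [div_eq_div_iff hApos.ne' hTXEpos.ne']
    exact hign y t t x
  have eq2 : mYTX P_E y t x / mTX P_E t x = mYTX P_O y t x / mTX P_O t x := by
    rw [div_eq_div_iff hTXEpos.ne' hCpos.ne']
    exact hmodY y t x
  have eq3 : mYTX P_O y t x / mTX P_O t x = P_O (y, t, t, x) / mTToX P_O t t x := by
    rw [hYTXO, hTXO]
  exact ⟨eq1.trans (eq2.trans eq3), eq3.symm⟩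

end
end

section
/- (Posterior predictive is a martingale.) Let A (parameters) and S (observations) be countable types, π a probability mass function on A, and p(· | α) a probability mass function on S for each α ∈ A. On a probability space let (θ, Z_1, Z_2, …) have the Bayesian joint law: θ has law π and, conditionally on θ, the Z_i are i.i.d. with law p(· | θ). For m ≥ 0 define the posterior π_m(α) = π(α) Π_{i=1}^m p(Z_i | α) / Σ_{α'} π(α') Π_{i=1}^m p(Z_i | α') (almost surely well-defined) and the posterior predictive P_m(z) = Σ_α p(z | α) π_m(α). Then for every z ∈ S and every m ≥ 1, E[P_m(z) | Z_1, …, Z_{m-1}] = P_{m-1}(z) almost surely. -/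
/-!
STATEMENT 13 (Posterior predictive is a martingale): `A` (parameters) and `S` (observations)
are countable, `π` is a prior pmf on `A` and `p(· | α)` a pmf on `S` for each `α`.  On a
probability space, `(θ, Z_1, Z_2, …)` has the Bayesian joint law: `θ ∼ π` and, given `θ`,
the `Z_i` are i.i.d. with law `p(· | θ)` (expressed through the finite-dimensional cylinder
masses).  With the posterior
`π_m(α) = π(α) ∏_{i=1}^m p(Z_i | α) / ∑_{α'} π(α') ∏_{i=1}^m p(Z_i | α')`
and the posterior predictive `P_m(z) = ∑_α p(z | α) π_m(α)`, for every `z ∈ S` and `m ≥ 1`,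
`E[P_m(z) | Z_1, …, Z_{m-1}] = P_{m-1}(z)` almost surely.

Indexing: `Z i` for `i : ℕ` denotes the `(i+1)`-th observation `Z_{i+1}`, so `Z_1, …, Z_m`
corresponds to indices in `Finset.range m`.
-/

open MeasureTheory
open scoped BigOperators

noncomputable section

namespace PostPredAux

/-- Cylinder set: first `k` observations take prescribed values. -/
def cyl {Ω S : Type*} (Z : ℕ → Ω → S) (k : ℕ) (f : ℕ → S) : Set Ω :=
  {ω | ∀ i < k, Z i ω = f i}

/-- Total mass of the cylinder (denominator of the posterior). -/
noncomputable def Dw {A S : Type*} (π : A → ℝ) (p : S → A → ℝ) (k : ℕ) (f : ℕ → S) : ℝ :=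
  ∑' a, π a * ∏ i ∈ Finset.range k, p (f i) a

/-- Numerator of the posterior predictive. -/
noncomputable def Nw {A S : Type*} (π : A → ℝ) (p : S → A → ℝ) (z : S) (k : ℕ)
    (f : ℕ → S) : ℝ :=
  ∑' a, p z a * (π a * ∏ i ∈ Finset.range k, p (f i) a)

end PostPredAux

open PostPredAux

theorem posterior_predictive_is_martingale
    {Ω : Type*} [MeasurableSpace Ω]
    {A S : Type*} [Countable A] [Countable S]
    [MeasurableSpace A] [MeasurableSingletonClass A]
    [MeasurableSpace S] [MeasurableSingletonClass S]
    (P : Measure Ω) [IsProbabilityMeasure P]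
    (θ : Ω → A) (Z : ℕ → Ω → S)
    (hθ : Measurable θ) (hZ : ∀ i, Measurable (Z i))
    -- the prior pmf and the likelihood pmfs
    (π : A → ℝ) (p : S → A → ℝ)
    (hπ_nonneg : ∀ a, 0 ≤ π a) (hπ_sum : HasSum π 1)
    (hp_nonneg : ∀ z a, 0 ≤ p z a) (hp_sum : ∀ a, HasSum (fun z => p z a) 1)
    -- Bayesian joint law: `θ ∼ π` and, given `θ`, the `Z_i` are i.i.d. with law `p(· | θ)`
    (hjoint : ∀ (m : ℕ) (a : A) (f : ℕ → S),
      (P {ω | θ ω = a ∧ ∀ i < m, Z i ω = f i}).toReal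
        = π a * ∏ i ∈ Finset.range m, p (f i) a)
    -- the posterior
    (πm : ℕ → A → Ω → ℝ)
    (hπm : ∀ m a ω,
      πm m a ω = π a * (∏ i ∈ Finset.range m, p (Z i ω) a)
        / ∑' a' : A, π a' * ∏ i ∈ Finset.range m, p (Z i ω) a')
    -- the posterior predictive
    (Pm : ℕ → S → Ω → ℝ)
    (hPm : ∀ m z ω, Pm m z ω = ∑' a : A, p z a * πm m a ω) :
    ∀ (z : S) (m : ℕ), 1 ≤ m →
      P[Pm m z | ⨆ i ∈ Set.Iio (m - 1), MeasurableSpace.comap (Z i) inferInstance]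
        =ᵐ[P] Pm (m - 1) z := by
  intro z m hm1
  obtain ⟨n, rfl⟩ : ∃ n, m = n + 1 := ⟨m - 1, (Nat.succ_pred_eq_of_pos hm1).symm⟩
  simp only [Nat.add_sub_cancel]
  clear hm1
  -- nonemptiness
  have hΩne : Nonempty Ω := by
    rcases isEmpty_or_nonempty Ω with h | h
    · exfalso
      have h1 : P Set.univ = 1 := measure_univ
      rw [Set.univ_eq_empty_iff.mpr h, measure_empty] at h1
      exact zero_ne_one h1
    · exact h
  haveI hSne : Nonempty S := ⟨Z 0 (Classical.choice hΩne)⟩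
  -- basic bounds
  have hπ1 : ∀ a, π a ≤ 1 := fun a => le_hasSum hπ_sum a fun j _ => hπ_nonneg j
  have hp1 : ∀ s a, p s a ≤ 1 := fun s a => le_hasSum (hp_sum a) s fun j _ => hp_nonneg j a
  have hprod0 : ∀ (k : ℕ) (f : ℕ → S) (a : A), 0 ≤ ∏ i ∈ Finset.range k, p (f i) a :=
    fun k f a => Finset.prod_nonneg fun i _ => hp_nonneg _ a
  have hprod1 : ∀ (k : ℕ) (f : ℕ → S) (a : A), ∏ i ∈ Finset.range k, p (f i) a ≤ 1 :=
    fun k f a => Finset.prod_le_one (fun i _ => hp_nonneg _ a) (fun i _ => hp1 _ a)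
  have hw0 : ∀ (k : ℕ) (f : ℕ → S) (a : A), 0 ≤ π a * ∏ i ∈ Finset.range k, p (f i) a :=
    fun k f a => mul_nonneg (hπ_nonneg a) (hprod0 k f a)
  have hwle : ∀ (k : ℕ) (f : ℕ → S) (a : A), π a * ∏ i ∈ Finset.range k, p (f i) a ≤ π a :=
    fun k f a => mul_le_of_le_one_right (hπ_nonneg a) (hprod1 k f a)
  have hwsum : ∀ (k : ℕ) (f : ℕ → S),
      Summable (fun a => π a * ∏ i ∈ Finset.range k, p (f i) a) :=
    fun k f => Summable.of_nonneg_of_le (hw0 k f) (hwle k f) hπ_sum.summable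
  have hv0 : ∀ (k : ℕ) (f : ℕ → S) (a : A),
      0 ≤ p z a * (π a * ∏ i ∈ Finset.range k, p (f i) a) :=
    fun k f a => mul_nonneg (hp_nonneg z a) (hw0 k f a)
  have hvle : ∀ (k : ℕ) (f : ℕ → S) (a : A),
      p z a * (π a * ∏ i ∈ Finset.range k, p (f i) a) ≤ π a :=
    fun k f a => le_trans (mul_le_of_le_one_left (hw0 k f a) (hp1 z a)) (hwle k f a)
  have hvsum : ∀ (k : ℕ) (f : ℕ → S),
      Summable (fun a => p z a * (π a * ∏ i ∈ Finset.range k, p (f i) a)) :=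
    fun k f => Summable.of_nonneg_of_le (hv0 k f) (hvle k f) hπ_sum.summable
  -- facts about Dw / Nw
  have hD0 : ∀ (k : ℕ) (f : ℕ → S), 0 ≤ Dw π p k f := fun k f => by
    simp only [Dw]; exact tsum_nonneg (hw0 k f)
  have hN0 : ∀ (k : ℕ) (f : ℕ → S), 0 ≤ Nw π p z k f := fun k f => by
    simp only [Nw]; exact tsum_nonneg (hv0 k f)
  have hND : ∀ (k : ℕ) (f : ℕ → S), Nw π p z k f ≤ Dw π p k f := fun k f => by
    simp only [Nw, Dw]
    exact Summable.tsum_le_tsum (fun a => mul_le_of_le_one_left (hw0 k f a) (hp1 z a))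
      (hvsum k f) (hwsum k f)
  have hDw_congr : ∀ (k : ℕ) (f g : ℕ → S), (∀ i < k, f i = g i) →
      Dw π p k f = Dw π p k g := by
    intro k f g h
    simp only [Dw]
    exact tsum_congr fun a =>
      congrArg (π a * ·) (Finset.prod_congr rfl fun i hi => by
        rw [h i (Finset.mem_range.mp hi)])
  have hNw_congr : ∀ (k : ℕ) (f g : ℕ → S), (∀ i < k, f i = g i) →
      Nw π p z k f = Nw π p z k g := by
    intro k f g h
    simp only [Nw]
    exact tsum_congr fun a =>
      congrArg (p z a * ·) (congrArg (π a * ·) (Finset.prod_congr rfl fun i hi => by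
        rw [h i (Finset.mem_range.mp hi)]))
  -- cylinder sets
  have hCmeas : ∀ (k : ℕ) (f : ℕ → S), MeasurableSet (cyl Z k f) := by
    intro k f
    have h : cyl Z k f = ⋂ (i : ℕ) (_ : i < k), Z i ⁻¹' {f i} := by
      ext ω; simp [cyl]
    rw [h]
    exact MeasurableSet.iInter fun i => MeasurableSet.iInter fun _ =>
      (hZ i) (measurableSet_singleton _)
  -- measure of cylinders
  have hPC : ∀ (k : ℕ) (f : ℕ → S), (P (cyl Z k f)).toReal = Dw π p k f := by
    intro k f
    have hdecomp : cyl Z k f = ⋃ a : A, {ω | θ ω = a ∧ ∀ i < k, Z i ω = f i} := by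
      ext ω
      simp only [cyl, Set.mem_setOf_eq, Set.mem_iUnion]
      exact ⟨fun h => ⟨θ ω, rfl, h⟩, fun ⟨a, _, h⟩ => h⟩
    have hmeasa : ∀ a : A, MeasurableSet {ω | θ ω = a ∧ ∀ i < k, Z i ω = f i} := by
      intro a
      have h : {ω | θ ω = a ∧ ∀ i < k, Z i ω = f i} = θ ⁻¹' {a} ∩ cyl Z k f := rfl
      rw [h]
      exact (hθ (measurableSet_singleton a)).inter (hCmeas k f)
    have hdisj : Pairwise (Function.onFun Disjoint
        fun a : A => {ω | θ ω = a ∧ ∀ i < k, Z i ω = f i}) := by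
      intro a b hab
      simp only [Function.onFun, Set.disjoint_left, Set.mem_setOf_eq]
      rintro ω ⟨ha, -⟩ ⟨hb, -⟩
      exact hab (ha ▸ hb)
    rw [hdecomp, measure_iUnion hdisj hmeasa,
      ENNReal.tsum_toReal_eq fun a => measure_ne_top P _]
    simp only [Dw]
    exact tsum_congr fun a => hjoint k a f
  -- pointwise formula for Pm
  have hPm_eq : ∀ (k : ℕ) (ω : Ω),
      Pm k z ω = Nw π p z k (fun i => Z i ω) / Dw π p k (fun i => Z i ω) := by
    intro k ω
    rw [hPm]
    simp only [hπm, Nw, Dw]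
    rw [← tsum_div_const]
    exact tsum_congr fun a => (mul_div_assoc _ _ _).symm
  have hval : ∀ (k : ℕ) (f : ℕ → S), Set.EqOn (Pm k z)
      (fun _ => Nw π p z k f / Dw π p k f) (cyl Z k f) := by
    intro k f ω hω
    have h : ∀ i < k, Z i ω = f i := hω
    rw [hPm_eq k ω, hNw_congr k _ f h, hDw_congr k _ f h]
  -- integral over a cylinder
  have hint_cyl : ∀ (k : ℕ) (f : ℕ → S),
      ∫ ω in cyl Z k f, Pm k z ω ∂P = Nw π p z k f := by
    intro k f
    rw [setIntegral_congr_fun (hCmeas k f) (hval k f), setIntegral_const, measureReal_def, hPC k f,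
      smul_eq_mul]
    rcases eq_or_ne (Dw π p k f) 0 with h0 | h0
    · have hN0' : Nw π p z k f = 0 := le_antisymm (h0 ▸ hND k f) (hN0 k f)
      simp [h0, hN0']
    · rw [mul_comm, div_mul_cancel₀ _ h0]
  -- measurability of Pm k z (for any σ-algebra making each Z i measurable)
  have hfac : ∀ k : ℕ, Pm k z = (fun v : Fin k → S =>
      Nw π p z k (fun i => if h : i < k then v ⟨i, h⟩ else Classical.arbitrary S)
        / Dw π p k (fun i => if h : i < k then v ⟨i, h⟩ else Classical.arbitrary S))
      ∘ (fun ω (i : Fin k) => Z i ω) := by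
    intro k
    funext ω
    simp only [Function.comp_apply]
    rw [hPm_eq k ω]
    have h : ∀ i < k,
        (fun j => Z j ω) i
          = (fun j => if h : j < k then Z (↑(⟨j, h⟩ : Fin k)) ω else Classical.arbitrary S) i :=
      fun i hi => by simp [hi]
    rw [hNw_congr k _ _ h, hDw_congr k _ _ h]
  have hmeasPm : ∀ k : ℕ, Measurable (Pm k z) := by
    intro k
    rw [hfac k]
    exact (measurable_of_countable _).comp (measurable_pi_lambda _ fun i => hZ i)
  -- bounds and integrability
  have hPm01 : ∀ (k : ℕ) (ω : Ω), 0 ≤ Pm k z ω ∧ Pm k z ω ≤ 1 := by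
    intro k ω
    rw [hPm_eq k ω]
    refine ⟨div_nonneg (hN0 k _) (hD0 k _), ?_⟩
    rcases eq_or_ne (Dw π p k (fun i => Z i ω)) 0 with h0 | h0
    · simp [h0]
    · rw [div_le_one (lt_of_le_of_ne (hD0 k _) (Ne.symm h0))]
      exact hND k _
  have hint : ∀ k : ℕ, Integrable (Pm k z) P := by
    intro k
    refine ⟨(hmeasPm k).aestronglyMeasurable, ?_⟩
    refine HasFiniteIntegral.of_bounded (C := 1) (Filter.Eventually.of_forall fun ω => ?_)
    rw [Real.norm_eq_abs, abs_le]
    exact ⟨by linarith [(hPm01 k ω).1], (hPm01 k ω).2⟩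
  -- the key martingale step over a single cylinder of length n
  have hstep : ∀ f : ℕ → S,
      ∫ ω in cyl Z n f, Pm (n + 1) z ω ∂P = Nw π p z n f := by
    intro f
    have hdec : cyl Z n f = ⋃ s : S, cyl Z (n + 1) (Function.update f n s) := by
      ext ω
      simp only [cyl, Set.mem_setOf_eq, Set.mem_iUnion]
      constructor
      · intro h
        refine ⟨Z n ω, fun i hi => ?_⟩
        rcases Nat.lt_succ_iff_lt_or_eq.mp hi with hi' | hi'
        · rw [Function.update_of_ne (Nat.ne_of_lt hi'), h i hi']
        · subst hi'; rw [Function.update_self]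
      · rintro ⟨s, h⟩ i hi
        rw [h i (Nat.lt_succ_of_lt hi), Function.update_of_ne (Nat.ne_of_lt hi)]
    have hdisj : Pairwise (Function.onFun Disjoint
        fun s : S => cyl Z (n + 1) (Function.update f n s)) := by
      intro s s' hss'
      simp only [Function.onFun, Set.disjoint_left]
      intro ω h1 h2
      apply hss'
      have e1 : Z n ω = s := by
        have := h1 n (Nat.lt_succ_self n); rwa [Function.update_self] at this
      have e2 : Z n ω = s' := by
        have := h2 n (Nat.lt_succ_self n); rwa [Function.update_self] at this
      rw [← e1, ← e2]
    have hintOn : IntegrableOn (Pm (n + 1) z) (⋃ s : S, cyl Z (n + 1) (Function.update f n s)) P :=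
      (hint (n + 1)).integrableOn
    rw [hdec, integral_iUnion (fun s => hCmeas _ _) hdisj hintOn]
    have hterm : ∀ s : S, Nw π p z (n + 1) (Function.update f n s)
        = ∑' a, (p z a * (π a * ∏ i ∈ Finset.range n, p (f i) a)) * p s a := by
      intro s
      simp only [Nw]
      refine tsum_congr fun a => ?_
      rw [Finset.prod_range_succ, Function.update_self,
        Finset.prod_congr rfl (fun i hi => by
          rw [Function.update_of_ne (Nat.ne_of_lt (Finset.mem_range.mp hi))])]
      ring
    set c : A → ℝ := fun a => p z a * (π a * ∏ i ∈ Finset.range n, p (f i) a) with hc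
    have hc0 : ∀ a, 0 ≤ c a := hv0 n f
    have hcle : ∀ a, c a ≤ π a := hvle n f
    have hcsum : Summable c := hvsum n f
    have hrow : ∀ a, (∑' s : S, c a * p s a) = c a := fun a => by
      rw [tsum_mul_left, (hp_sum a).tsum_eq, mul_one]
    have hswap : ∑' (s : S) (a : A), c a * p s a = ∑' (a : A) (s : S), c a * p s a := by
      refine Summable.tsum_comm' ?_ ?_ ?_
      · refine (summable_prod_of_nonneg ?_).2
          ⟨fun a => (hp_sum a).summable.mul_left (c a), ?_⟩
        · intro q; exact mul_nonneg (hc0 _) (hp_nonneg _ _)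
        · refine Summable.congr hcsum fun a => ?_
          simp only [Function.uncurry]
          exact (hrow a).symm
      · intro a; exact (hp_sum a).summable.mul_left (c a)
      · intro s
        exact Summable.of_nonneg_of_le (fun a => mul_nonneg (hc0 a) (hp_nonneg s a))
          (fun a => le_trans (mul_le_of_le_one_right (hc0 a) (hp1 s a)) (hcle a))
          hπ_sum.summable
    calc ∑' s : S, ∫ ω in cyl Z (n + 1) (Function.update f n s), Pm (n + 1) z ω ∂P
        = ∑' s : S, Nw π p z (n + 1) (Function.update f n s) :=
          tsum_congr fun s => hint_cyl (n + 1) _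
      _ = ∑' (s : S) (a : A), c a * p s a := tsum_congr fun s => by
          rw [hterm s]
      _ = ∑' (a : A) (s : S), c a * p s a := hswap
      _ = ∑' a : A, c a := tsum_congr hrow
      _ = Nw π p z n f := rfl
  -- the sub-σ-algebra
  have hle : (⨆ i ∈ Set.Iio n, MeasurableSpace.comap (Z i) inferInstance)
      ≤ (inferInstance : MeasurableSpace Ω) :=
    iSup₂_le fun i _ => (hZ i).comap_le
  -- measurability of Pm n z w.r.t. the sub-σ-algebra
  have hZG : ∀ i : Fin n, Measurable[⨆ i ∈ Set.Iio n, MeasurableSpace.comap (Z i) inferInstance]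
      (Z i) := fun i =>
    Measurable.of_comap_le (le_iSup₂
      (f := fun (j : ℕ) (_ : j ∈ Set.Iio n) => MeasurableSpace.comap (Z j) inferInstance)
      (i : ℕ) i.isLt)
  have hmeasPmG : Measurable[⨆ i ∈ Set.Iio n, MeasurableSpace.comap (Z i) inferInstance]
      (Pm n z) := by
    letI : MeasurableSpace Ω := ⨆ i ∈ Set.Iio n, MeasurableSpace.comap (Z i) inferInstance
    rw [hfac n]
    exact (measurable_of_countable _).comp (measurable_pi_lambda _ fun i => hZG i)
  -- integral equality on sub-σ-algebra sets
  have hset : ∀ s : Set Ω,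
      MeasurableSet[⨆ i ∈ Set.Iio n, MeasurableSpace.comap (Z i) inferInstance] s →
      ∫ ω in s, Pm n z ω ∂P = ∫ ω in s, Pm (n + 1) z ω ∂P := by
    intro s hs
    have hle' : (⨆ i ∈ Set.Iio n, MeasurableSpace.comap (Z i) inferInstance)
        ≤ MeasurableSpace.comap (fun ω (i : Fin n) => Z i ω) ⊤ := by
      refine iSup₂_le fun i hi => ?_
      have hik : i < n := hi
      have heq : MeasurableSpace.comap (Z i) (inferInstance : MeasurableSpace S)
          = MeasurableSpace.comap (fun ω (j : Fin n) => Z j ω)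
            (MeasurableSpace.comap (fun v : Fin n → S => v ⟨i, hik⟩) inferInstance) := by
        rw [MeasurableSpace.comap_comp]
        rfl
      rw [heq]
      exact MeasurableSpace.comap_mono le_top
    obtain ⟨t, -, rfl⟩ := MeasurableSpace.measurableSet_comap.mp (hle' s hs)
    -- extend a finite tuple to a sequence
    set ext : (Fin n → S) → (ℕ → S) :=
      fun g i => if h : i < n then g ⟨i, h⟩ else Classical.arbitrary S with hext
    have hfiber : ∀ g : Fin n → S,
        (fun ω (i : Fin n) => Z i ω) ⁻¹' {g} = cyl Z n (ext g) := by
      intro g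
      ext ω
      simp only [Set.mem_preimage, Set.mem_singleton_iff, cyl, Set.mem_setOf_eq, funext_iff,
        hext]
      constructor
      · intro h i hi
        simp only [hi, dif_pos]
        exact h ⟨i, hi⟩
      · intro h i
        have := h i i.isLt
        simpa [i.isLt] using this
    have hdec : (fun ω (i : Fin n) => Z i ω) ⁻¹' t
        = ⋃ g : t, (fun ω (i : Fin n) => Z i ω) ⁻¹' {(g : Fin n → S)} := by
      ext ω
      simp only [Set.mem_preimage, Set.mem_iUnion, Set.mem_singleton_iff]
      exact ⟨fun h => ⟨⟨_, h⟩, rfl⟩, fun ⟨g, hg⟩ => hg ▸ g.2⟩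
    have hmeas' : ∀ g : t, MeasurableSet ((fun ω (i : Fin n) => Z i ω) ⁻¹' {(g : Fin n → S)}) :=
      fun g => by rw [hfiber]; exact hCmeas n _
    have hdisj : Pairwise (Function.onFun Disjoint
        fun g : t => (fun ω (i : Fin n) => Z i ω) ⁻¹' {(g : Fin n → S)}) := by
      intro g g' hgg'
      simp only [Function.onFun, Set.disjoint_left, Set.mem_preimage, Set.mem_singleton_iff]
      intro ω h1 h2
      exact hgg' (Subtype.ext (h1 ▸ h2))
    rw [hdec,
      integral_iUnion hmeas' hdisj ((hint n).integrableOn),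
      integral_iUnion hmeas' hdisj ((hint (n + 1)).integrableOn)]
    refine tsum_congr fun g => ?_
    rw [hfiber, hint_cyl n (ext g), hstep (ext g)]
  -- conclude via uniqueness of conditional expectation
  haveI : SigmaFinite (P.trim hle) := by infer_instance
  exact (ae_eq_condExp_of_forall_setIntegral_eq hle (hint (n + 1))
    (fun s _ _ => (hint n).integrableOn)
    (fun s hs _ => hset s hs)
    ((Measurable.stronglyMeasurable hmeasPmG).aestronglyMeasurable)).symm

end
end

section
/- (Consistency of the Hájek estimator / posterior mean.) Let (Y_i, T_i, X_i), i ≥ 1, be i.i.d. with common law P_O, where Y_i is real-valued, T_i ∈ {0,1}, X_i takes values in a countable type 𝒳, and suppose ε < π(X_1) < 1 − ε almost surely for some ε ∈ (0, 1/2), where π(x) = P_O(T=1 | X=x), and E_{P_O}[Y² ] < ∞. Let μ_0 = Σ_x E_{P_O}[Y | T=1, X=x] P_O(X=x). Then (1/n) Σ_{i=1}^n T_i/π(X_i) → 1 in probability, and the Hájek estimator ( Σ_{i=1}^n T_i Y_i / π(X_i) ) / ( Σ_{i=1}^n T_i / π(X_i) ) converges in probability to μ_0 as n → ∞ (with any fixed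 convention for the value when the denominator is zero, an event whose probability tends to zero). -/
/-!
STATEMENT 16 (Consistency of the Hájek estimator / posterior mean): `(Y_i, T_i, X_i)`,
`i ≥ 1`, are i.i.d. with common law `μO` (here realized as `Z i : Ω → ℝ × Bool × 𝒳` on a
probability space `(Ω, P)`), `ε < π(X_1) < 1 − ε` a.s. for some `ε ∈ (0, 1/2)` where
`π(x) = P_O(T=1 | X=x)`, and `E[Y²] < ∞`.  With
`μ₀ = ∑_x E[Y | T=1, X=x] P_O(X=x)`, both `(1/n) ∑_{i=1}^n T_i/π(X_i) → 1` and the Hájek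
estimator `(∑ T_i Y_i/π(X_i)) / (∑ T_i/π(X_i)) → μ₀` in probability (division by zero takes
the Lean convention value `0`, a fixed convention; the denominator vanishes with probability
tending to zero).
-/

open MeasureTheory
open scoped BigOperators ENNReal

noncomputable section

/-- The propensity score `π(x) = μ(T=1 | X=x)` of a law `μ` on `ℝ × Bool × 𝒳`. -/
def propLaw {𝒳 : Type*} [MeasurableSpace 𝒳] (μ : Measure (ℝ × Bool × 𝒳)) (x : 𝒳) : ℝ :=
  (μ {p | p.2.1 = true ∧ p.2.2 = x}).toReal / (μ {p | p.2.2 = x}).toReal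

theorem hajek_estimator_consistency
    {Ω : Type*} [MeasurableSpace Ω]
    {𝒳 : Type*} [Countable 𝒳] [MeasurableSpace 𝒳] [MeasurableSingletonClass 𝒳]
    (P : Measure Ω) [IsProbabilityMeasure P]
    (Z : ℕ → Ω → ℝ × Bool × 𝒳)
    (hZmeas : ∀ i, Measurable (Z i))
    -- independence
    (hindep : ProbabilityTheory.iIndepFun Z P)
    -- identical distribution with common law `μO`
    (μO : Measure (ℝ × Bool × 𝒳)) [IsProbabilityMeasure μO]
    (hlaw : ∀ i, Measure.map (Z i) P = μO)
    (ε : ℝ) (hε : 0 < ε ∧ ε < 1 / 2)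
    -- `ε < π(X) < 1 − ε` almost surely
    (hπ : ∀ᵐ p ∂μO, ε < propLaw μO p.2.2 ∧ propLaw μO p.2.2 < 1 - ε)
    -- `E[Y²] < ∞`
    (hY2 : Integrable (fun p : ℝ × Bool × 𝒳 => p.1 ^ 2) μO)
    (μ0 : ℝ)
    -- `μ₀ = ∑_x E[Y | T=1, X=x] P_O(X=x)`
    (hμ0 : μ0 = ∑' x : 𝒳,
      ((∫ p in {p : ℝ × Bool × 𝒳 | p.2.1 = true ∧ p.2.2 = x}, p.1 ∂μO)
          / (μO {p : ℝ × Bool × 𝒳 | p.2.1 = true ∧ p.2.2 = x}).toReal)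
        * (μO {p : ℝ × Bool × 𝒳 | p.2.2 = x}).toReal) :
    -- `(1/n) ∑_{i=1}^n T_i/π(X_i) → 1` in probability
    MeasureTheory.TendstoInMeasure P
      (fun (n : ℕ) ω => (1 / (n : ℝ)) * ∑ i ∈ Finset.range n,
        (if (Z i ω).2.1 = true then 1 / propLaw μO (Z i ω).2.2 else 0))
      Filter.atTop (fun _ => 1)
    -- the Hájek estimator converges in probability to `μ₀`
    ∧ MeasureTheory.TendstoInMeasure P
        (fun (n : ℕ) ω =>
          (∑ i ∈ Finset.range n,
            (if (Z i ω).2.1 = true then (Z i ω).1 / propLaw μO (Z i ω).2.2 else 0))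
          / ∑ i ∈ Finset.range n,
            (if (Z i ω).2.1 = true then 1 / propLaw μO (Z i ω).2.2 else 0))
        Filter.atTop (fun _ => μ0) := by
  classical
  obtain ⟨hε0, hε2⟩ := hε
  set f : ℝ × Bool × 𝒳 → ℝ := fun p => if p.2.1 = true then 1 / propLaw μO p.2.2 else 0
    with hfdef
  set g : ℝ × Bool × 𝒳 → ℝ := fun p => if p.2.1 = true then p.1 / propLaw μO p.2.2 else 0
    with hgdef
  -- measurability basics
  have hSm : ∀ x : 𝒳, MeasurableSet {p : ℝ × Bool × 𝒳 | p.2.2 = x} := fun x =>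
    (measurable_snd.snd) (measurableSet_singleton x)
  have hTm : MeasurableSet {p : ℝ × Bool × 𝒳 | p.2.1 = true} :=
    (measurable_snd.fst) (measurableSet_singleton true)
  have hAm : ∀ x : 𝒳, MeasurableSet {p : ℝ × Bool × 𝒳 | p.2.1 = true ∧ p.2.2 = x} := fun x =>
    hTm.inter (hSm x)
  have hπmeas : Measurable fun p : ℝ × Bool × 𝒳 => propLaw μO p.2.2 := fun s hs =>
    measurable_snd.snd (measurable_of_countable (propLaw μO) hs)
  have hfmeas : Measurable f :=
    Measurable.ite hTm (measurable_const.div hπmeas) measurable_const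
  have hgmeas : Measurable g :=
    Measurable.ite hTm (measurable_fst.div hπmeas) measurable_const
  -- positivity of the propensity score on atoms
  have hπ' : μO {p : ℝ × Bool × 𝒳 |
      ¬(ε < propLaw μO p.2.2 ∧ propLaw μO p.2.2 < 1 - ε)} = 0 := by
    rw [ae_iff] at hπ; exact hπ
  have hkey : ∀ x : 𝒳, μO {p : ℝ × Bool × 𝒳 | p.2.2 = x} ≠ 0 →
      ε < propLaw μO x ∧ propLaw μO x < 1 - ε := by
    intro x hx
    by_contra h
    apply hx
    refine measure_mono_null ?_ hπ'
    intro p hp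
    simp only [Set.mem_setOf_eq] at hp ⊢
    rw [hp]; exact h
  have hfin : ∀ s : Set (ℝ × Bool × 𝒳), μO s ≠ ⊤ := fun s => measure_ne_top μO s
  have hsub : ∀ x : 𝒳, μO {p : ℝ × Bool × 𝒳 | p.2.1 = true ∧ p.2.2 = x}
      ≤ μO {p : ℝ × Bool × 𝒳 | p.2.2 = x} := fun x => measure_mono (fun p hp => hp.2)
  have haR : ∀ x : 𝒳, μO {p : ℝ × Bool × 𝒳 | p.2.2 = x} ≠ 0 →
      (μO {p : ℝ × Bool × 𝒳 | p.2.1 = true ∧ p.2.2 = x}).toReal ≠ 0 := by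
    intro x hx h0
    have h1 := (hkey x hx).1
    rw [propLaw, h0, zero_div] at h1
    linarith
  -- disjoint cover by the fibers of X
  have hdis : Pairwise (Function.onFun Disjoint fun x : 𝒳 => {p : ℝ × Bool × 𝒳 | p.2.2 = x}) := by
    intro x y hxy
    simp only [Function.onFun, Set.disjoint_left]
    intro p hp hq
    exact hxy (hp.symm.trans hq)
  have hUnion : (⋃ x : 𝒳, {p : ℝ × Bool × 𝒳 | p.2.2 = x}) = Set.univ := by
    ext p; simp
  have hdecomp : ∀ F : ℝ × Bool × 𝒳 → ℝ, Integrable F μO →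
      ∫ p, F p ∂μO = ∑' x : 𝒳, ∫ p in {p : ℝ × Bool × 𝒳 | p.2.2 = x}, F p ∂μO := by
    intro F hF
    rw [← setIntegral_univ (μ := μO), ← hUnion,
      integral_iUnion hSm hdis (by rw [hUnion]; exact hF.integrableOn)]
  -- restriction to the treated part
  have hsplit : ∀ F : ℝ × Bool × 𝒳 → ℝ, Integrable F μO → (∀ p, p.2.1 = false → F p = 0) →
      ∀ x : 𝒳, ∫ p in {p : ℝ × Bool × 𝒳 | p.2.2 = x}, F p ∂μO
        = ∫ p in {p : ℝ × Bool × 𝒳 | p.2.1 = true ∧ p.2.2 = x}, F p ∂μO := by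
    intro F hF hF0 x
    have hset : {p : ℝ × Bool × 𝒳 | p.2.2 = x}
        = {p : ℝ × Bool × 𝒳 | p.2.1 = true ∧ p.2.2 = x}
          ∪ {p : ℝ × Bool × 𝒳 | p.2.1 = false ∧ p.2.2 = x} := by
      ext p
      simp only [Set.mem_setOf_eq, Set.mem_union]
      cases h : p.2.1 <;> simp [h]
    have hBm : MeasurableSet {p : ℝ × Bool × 𝒳 | p.2.1 = false ∧ p.2.2 = x} :=
      ((measurable_snd.fst) (measurableSet_singleton false)).inter (hSm x)
    have hdisj : Disjoint {p : ℝ × Bool × 𝒳 | p.2.1 = true ∧ p.2.2 = x}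
        {p : ℝ × Bool × 𝒳 | p.2.1 = false ∧ p.2.2 = x} := by
      rw [Set.disjoint_left]
      rintro p ⟨h1, -⟩ ⟨h2, -⟩
      rw [h1] at h2; exact Bool.noConfusion h2
    rw [hset, setIntegral_union hdisj hBm hF.integrableOn hF.integrableOn]
    have hz : ∫ p in {p : ℝ × Bool × 𝒳 | p.2.1 = false ∧ p.2.2 = x}, F p ∂μO = 0 := by
      rw [setIntegral_congr_fun hBm (g := fun _ => (0:ℝ)) (fun p hp => hF0 p hp.1)]
      simp
    rw [hz, add_zero]
  have hf0 : ∀ p : ℝ × Bool × 𝒳, p.2.1 = false → f p = 0 := by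
    intro p hp; simp [hfdef, hp]
  have hg0 : ∀ p : ℝ × Bool × 𝒳, p.2.1 = false → g p = 0 := by
    intro p hp; simp [hgdef, hp]
  -- integrability
  have hY1 : Integrable (fun p : ℝ × Bool × 𝒳 => p.1) μO := by
    refine (hY2.add (integrable_const 1)).mono' measurable_fst.aestronglyMeasurable
      (ae_of_all _ fun p => ?_)
    simp only [Real.norm_eq_abs, Pi.add_apply]
    nlinarith [sq_nonneg (|p.1| - 1), sq_abs p.1, abs_nonneg p.1]
  have hf_int : Integrable f μO := by
    refine (integrable_const (1 / ε)).mono' hfmeas.aestronglyMeasurable ?_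
    filter_upwards [hπ] with p hp
    have hp0 : 0 < propLaw μO p.2.2 := lt_trans hε0 hp.1
    simp only [hfdef]
    split_ifs with h
    · rw [Real.norm_eq_abs, abs_of_pos (by positivity)]
      exact one_div_le_one_div_of_le hε0 hp.1.le
    · simp; positivity
  have hg_int : Integrable g μO := by
    refine (hY1.abs.div_const ε).mono' hgmeas.aestronglyMeasurable ?_
    filter_upwards [hπ] with p hp
    have hp0 : 0 < propLaw μO p.2.2 := lt_trans hε0 hp.1
    simp only [hgdef]
    split_ifs with h
    · rw [Real.norm_eq_abs, abs_div, abs_of_pos hp0]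
      gcongr
      exact hp.1.le
    · simp
      positivity
  -- value of the integrals
  have hfA : ∀ x : 𝒳, ∫ p in {p : ℝ × Bool × 𝒳 | p.2.1 = true ∧ p.2.2 = x}, f p ∂μO
      = (μO {p : ℝ × Bool × 𝒳 | p.2.1 = true ∧ p.2.2 = x}).toReal * (1 / propLaw μO x) := by
    intro x
    rw [setIntegral_congr_fun (hAm x) (g := fun _ => 1 / propLaw μO x)
      (fun p hp => by simp [hfdef, hp.1, hp.2]), setIntegral_const, smul_eq_mul, measureReal_def]
  have hgA : ∀ x : 𝒳, ∫ p in {p : ℝ × Bool × 𝒳 | p.2.1 = true ∧ p.2.2 = x}, g p ∂μO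
      = (∫ p in {p : ℝ × Bool × 𝒳 | p.2.1 = true ∧ p.2.2 = x}, p.1 ∂μO) / propLaw μO x := by
    intro x
    rw [setIntegral_congr_fun (hAm x) (g := fun p => p.1 / propLaw μO x)
      (fun p hp => by simp [hgdef, hp.1, hp.2]), integral_div]
  have hintf : ∫ p, f p ∂μO = 1 := by
    rw [hdecomp f hf_int]
    have hterm : ∀ x : 𝒳, ∫ p in {p : ℝ × Bool × 𝒳 | p.2.2 = x}, f p ∂μO
        = (μO {p : ℝ × Bool × 𝒳 | p.2.2 = x}).toReal := by
      intro x
      rw [hsplit f hf_int hf0 x, hfA x]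
      by_cases hx : μO {p : ℝ × Bool × 𝒳 | p.2.2 = x} = 0
      · have ha0 : μO {p : ℝ × Bool × 𝒳 | p.2.1 = true ∧ p.2.2 = x} = 0 :=
          le_antisymm (le_trans (hsub x) hx.le) zero_le
        simp [ha0, hx]
      · have h1 := haR x hx
        have hm0 : (μO {p : ℝ × Bool × 𝒳 | p.2.2 = x}).toReal ≠ 0 := by
          rw [ENNReal.toReal_ne_zero]; exact ⟨hx, hfin _⟩
        rw [propLaw, one_div_div]
        field_simp
    rw [tsum_congr hterm, ← ENNReal.tsum_toReal_eq (fun x => hfin _),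
      ← measure_iUnion hdis hSm, hUnion, measure_univ, ENNReal.toReal_one]
  have hintg : ∫ p, g p ∂μO = μ0 := by
    rw [hdecomp g hg_int, hμ0]
    refine tsum_congr fun x => ?_
    rw [hsplit g hg_int hg0 x, hgA x]
    by_cases hx : μO {p : ℝ × Bool × 𝒳 | p.2.2 = x} = 0
    · have ha0 : μO {p : ℝ × Bool × 𝒳 | p.2.1 = true ∧ p.2.2 = x} = 0 :=
        le_antisymm (le_trans (hsub x) hx.le) zero_le
      have hI0 : ∫ p in {p : ℝ × Bool × 𝒳 | p.2.1 = true ∧ p.2.2 = x}, p.1 ∂μO = 0 := by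
        rw [Measure.restrict_eq_zero.mpr ha0, integral_zero_measure]
      simp [hI0, hx]
    · have h1 := haR x hx
      have hm0 : (μO {p : ℝ × Bool × 𝒳 | p.2.2 = x}).toReal ≠ 0 := by
        rw [ENNReal.toReal_ne_zero]; exact ⟨hx, hfin _⟩
      rw [propLaw, div_div_eq_mul_div, div_mul_eq_mul_div, mul_comm]
  -- the strong law of large numbers
  have hident : ∀ i, ProbabilityTheory.IdentDistrib (Z i) (Z 0) P P := fun i =>
    ⟨(hZmeas i).aemeasurable, (hZmeas 0).aemeasurable, by rw [hlaw i, hlaw 0]⟩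
  have hSLLN : ∀ F : ℝ × Bool × 𝒳 → ℝ, Measurable F → Integrable F μO →
      ∀ᵐ ω ∂P, Filter.Tendsto (fun n => (∑ i ∈ Finset.range n, F (Z i ω)) / (n : ℝ))
        Filter.atTop (nhds (∫ p, F p ∂μO)) := by
    intro F hFm hFi
    have hFi' : Integrable (F ∘ Z 0) P := by
      rw [← hlaw 0] at hFi
      exact (integrable_map_measure hFm.aestronglyMeasurable (hZmeas 0).aemeasurable).mp hFi
    have h := ProbabilityTheory.strong_law_ae_real (fun i => F ∘ Z i) hFi'
      (fun i j hij => (hindep.indepFun hij).comp hFm hFm)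
      (fun i => (hident i).comp hFm)
    have heq : ∫ ω, F (Z 0 ω) ∂P = ∫ p, F p ∂μO := by
      rw [← hlaw 0]
      exact (integral_map (hZmeas 0).aemeasurable
        (by rw [hlaw 0]; exact hFm.aestronglyMeasurable)).symm
    simp only [Function.comp_apply] at h
    rw [heq] at h
    exact h
  have hf_ae := hSLLN f hfmeas hf_int
  rw [hintf] at hf_ae
  have hg_ae := hSLLN g hgmeas hg_int
  rw [hintg] at hg_ae
  have hfsum_meas : ∀ n : ℕ, Measurable fun ω => ∑ i ∈ Finset.range n, f (Z i ω) := fun n =>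
    Finset.measurable_sum _ fun i _ => hfmeas.comp (hZmeas i)
  have hgsum_meas : ∀ n : ℕ, Measurable fun ω => ∑ i ∈ Finset.range n, g (Z i ω) := fun n =>
    Finset.measurable_sum _ fun i _ => hgmeas.comp (hZmeas i)
  constructor
  · have h1 : MeasureTheory.TendstoInMeasure P
        (fun n ω => (∑ i ∈ Finset.range n, f (Z i ω)) / (n : ℝ)) Filter.atTop
        (fun _ => (1 : ℝ)) :=
      tendstoInMeasure_of_tendsto_ae
        (fun n => ((hfsum_meas n).div_const _).aestronglyMeasurable) hf_ae
    have heqfun : (fun (n : ℕ) (ω : Ω) => (1 / (n : ℝ)) * ∑ i ∈ Finset.range n,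
          (if (Z i ω).2.1 = true then 1 / propLaw μO (Z i ω).2.2 else 0))
        = fun n ω => (∑ i ∈ Finset.range n, f (Z i ω)) / (n : ℝ) := by
      funext n ω
      simp only [hfdef]
      rw [one_div, inv_mul_eq_div]
    rw [heqfun]
    exact h1
  · have hae : ∀ᵐ ω ∂P, Filter.Tendsto
        (fun n => (∑ i ∈ Finset.range n, g (Z i ω)) / (∑ i ∈ Finset.range n, f (Z i ω)))
        Filter.atTop (nhds μ0) := by
      filter_upwards [hf_ae, hg_ae] with ω hωf hωg
      have hdiv := hωg.div hωf one_ne_zero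
      rw [div_one] at hdiv
      apply hdiv.congr'
      filter_upwards [Filter.eventually_ge_atTop 1] with n hn
      have hn' : (n : ℝ) ≠ 0 := Nat.cast_ne_zero.mpr (Nat.one_le_iff_ne_zero.mp hn)
      exact div_div_div_cancel_right₀ hn' _ _
    have h2 : MeasureTheory.TendstoInMeasure P
        (fun n ω => (∑ i ∈ Finset.range n, g (Z i ω)) / (∑ i ∈ Finset.range n, f (Z i ω)))
        Filter.atTop (fun _ => μ0) :=
      tendstoInMeasure_of_tendsto_ae
        (fun n => ((hgsum_meas n).div (hfsum_meas n)).aestronglyMeasurable) hae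
    have heqfun : (fun (n : ℕ) (ω : Ω) =>
          (∑ i ∈ Finset.range n,
            (if (Z i ω).2.1 = true then (Z i ω).1 / propLaw μO (Z i ω).2.2 else 0))
          / ∑ i ∈ Finset.range n,
            (if (Z i ω).2.1 = true then 1 / propLaw μO (Z i ω).2.2 else 0))
        = fun n ω => (∑ i ∈ Finset.range n, g (Z i ω)) / (∑ i ∈ Finset.range n, f (Z i ω)) := by
      funext n ω
      simp only [hfdef, hgdef]
    rw [heqfun]
    exact h2

end
end

section
/- (Convergence of the posterior-variance bracket.) Let (Y_i, T_i, X_i), i ≥ 1, be i.i.d. with common law P_O, where Y_i is real-valued with E_{P_O}[Y⁴] < ∞ (so that all needed second moments of the weighted terms are finite), T_i ∈ {0,1}, X_i takes values in a countable type 𝒳, and ε < π(X_1) < 1 − ε almost surely for some ε ∈ (0, 1/2), where π(x) = P_O(T=1 | X=x). Let μ_0 = Σ_x E_{P_O}[Y | T=1, X=x] P_O(X=x) and m_2 = Σ_x E_{P_O}[Y² | T=1, X=x] P_O(X=x). Then ( Σ_{i=1}^n T_i Y_i² / π(X_i) ) / ( Σ_{j=1}^n T_j / π(X_j) ) − [ (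 Σ_{i=1}^n T_i Y_i / π(X_i) ) / ( Σ_{j=1}^n T_j / π(X_j) ) ]² converges in probability to m_2 − μ_0² as n → ∞. -/
set_option linter.unusedSectionVars false


/-!
STATEMENT 18 (Convergence of the posterior-variance bracket): `(Y_i, T_i, X_i)`, `i ≥ 1`,
are i.i.d. with common law `μO` (here realized as `Z i : Ω → ℝ × Bool × 𝒳` on a probability
space `(Ω, P)`), with `E[Y⁴] < ∞` and `ε < π(X_1) < 1 − ε` a.s. for some `ε ∈ (0, 1/2)`,
where `π(x) = P_O(T=1 | X=x)`.  With `μ₀ = ∑_x E[Y | T=1, X=x] P_O(X=x)` and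
`m₂ = ∑_x E[Y² | T=1, X=x] P_O(X=x)`, the bracket
`(∑ T_i Y_i²/π(X_i)) / (∑ T_j/π(X_j)) − [(∑ T_i Y_i/π(X_i)) / (∑ T_j/π(X_j))]²`
converges in probability to `m₂ − μ₀²` (ratios with zero denominator take the fixed Lean
convention value `0`; the denominator vanishes with probability tending to zero).
-/

open MeasureTheory
open scoped BigOperators ENNReal

noncomputable section

section PVBAux

open Filter
open scoped Topology

lemma pvb_abs_le_one_add_pow4 (y : ℝ) : ‖y‖ ≤ 1 + y ^ 4 := by
  rw [Real.norm_eq_abs]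
  rcases abs_cases y with ⟨h, _⟩ | ⟨h, _⟩ <;>
    nlinarith [sq_nonneg (y - 1), sq_nonneg (y + 1), sq_nonneg (y ^ 2 - 1), sq_nonneg y,
      sq_nonneg (y ^ 2 - y), sq_nonneg (y ^ 2 + y)]

lemma pvb_sq_le_one_add_pow4 (y : ℝ) : ‖y ^ 2‖ ≤ 1 + y ^ 4 := by
  rw [Real.norm_eq_abs, abs_of_nonneg (sq_nonneg y)]
  nlinarith [sq_nonneg (y ^ 2 - 1)]

lemma pvb_div_div (a b c : ℝ) (hc : c ≠ 0) : (a / c) / (b / c) = a / b := by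
  rcases eq_or_ne b 0 with h | h
  · simp [h]
  · field_simp

lemma pvb_slln {Ω : Type*} [MeasurableSpace Ω] {𝒳 : Type*} [MeasurableSpace 𝒳]
    (P : Measure Ω) [IsProbabilityMeasure P]
    (Z : ℕ → Ω → ℝ × Bool × 𝒳) (hZmeas : ∀ i, Measurable (Z i))
    (hindep : ProbabilityTheory.iIndepFun Z P)
    (μO : Measure (ℝ × Bool × 𝒳)) (hlaw : ∀ i, Measure.map (Z i) P = μO)
    {g : ℝ × Bool × 𝒳 → ℝ} (hg : Measurable g) (hgi : Integrable g μO) :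
    ∀ᵐ ω ∂P, Tendsto (fun n : ℕ => (∑ i ∈ Finset.range n, g (Z i ω)) / n)
      atTop (𝓝 (∫ p, g p ∂μO)) := by
  have hZident : ∀ i, ProbabilityTheory.IdentDistrib (Z i) (Z 0) P P := fun i =>
    ⟨(hZmeas i).aemeasurable, (hZmeas 0).aemeasurable, by rw [hlaw i, hlaw 0]⟩
  have hint : Integrable (fun ω => g (Z 0 ω)) P := by
    have h1 : Integrable g (Measure.map (Z 0) P) := (hlaw 0) ▸ hgi
    exact (integrable_map_measure hg.aestronglyMeasurable (hZmeas 0).aemeasurable).mp h1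
  have hE : ∫ ω, g (Z 0 ω) ∂P = ∫ p, g p ∂μO := by
    rw [← hlaw 0, integral_map (hZmeas 0).aemeasurable hg.aestronglyMeasurable]
  have := ProbabilityTheory.strong_law_ae_real (fun i ω => g (Z i ω)) hint
    (fun i j hij => (ProbabilityTheory.iIndepFun.indepFun hindep hij).comp hg hg)
    (fun i => (hZident i).comp hg)
  rw [hE] at this
  exact this

variable {𝒳 : Type*} [Countable 𝒳] [MeasurableSpace 𝒳] [MeasurableSingletonClass 𝒳]
  (μO : Measure (ℝ × Bool × 𝒳)) [IsProbabilityMeasure μO]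

lemma pvb_measT : MeasurableSet {p : ℝ × Bool × 𝒳 | p.2.1 = true} :=
  (measurable_fst.comp measurable_snd) (measurableSet_singleton true)

lemma pvb_measX (x : 𝒳) : MeasurableSet {p : ℝ × Bool × 𝒳 | p.2.2 = x} :=
  (measurable_snd.comp measurable_snd) (measurableSet_singleton x)

lemma pvb_measTX (x : 𝒳) : MeasurableSet {p : ℝ × Bool × 𝒳 | p.2.1 = true ∧ p.2.2 = x} := by
  rw [Set.setOf_and]
  exact (pvb_measT (𝒳 := 𝒳)).inter (pvb_measX x)

lemma pvb_measπ : Measurable (fun p : ℝ × Bool × 𝒳 => propLaw μO p.2.2) :=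
  Measurable.comp (measurable_of_countable (propLaw μO)) (measurable_snd.comp measurable_snd)

lemma pvb_measg {f : ℝ → ℝ} (hf : Measurable f) :
    Measurable (fun p : ℝ × Bool × 𝒳 =>
      if p.2.1 = true then f p.1 / propLaw μO p.2.2 else 0) :=
  Measurable.ite pvb_measT ((hf.comp measurable_fst).div (pvb_measπ μO)) measurable_const

lemma pvb_prop_pos {ε : ℝ} (hπ' : ∀ᵐ p ∂μO, ε < propLaw μO p.2.2) (x : 𝒳)
    (hx : μO {p : ℝ × Bool × 𝒳 | p.2.2 = x} ≠ 0) : ε < propLaw μO x := by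
  by_contra h'
  apply hx
  refine measure_mono_null (fun p hp => ?_) (ae_iff.mp hπ')
  rw [Set.mem_setOf_eq] at hp ⊢
  rw [hp]
  exact h'

lemma pvb_integrable_g {ε : ℝ} (hε0 : 0 < ε)
    (hπ' : ∀ᵐ p ∂μO, ε < propLaw μO p.2.2) {f : ℝ → ℝ} (hf : Measurable f)
    (hfi : Integrable (fun p : ℝ × Bool × 𝒳 => f p.1) μO) :
    Integrable (fun p : ℝ × Bool × 𝒳 =>
      if p.2.1 = true then f p.1 / propLaw μO p.2.2 else 0) μO := by
  refine Integrable.mono' (hfi.abs.const_mul ε⁻¹)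
    (pvb_measg μO hf).aestronglyMeasurable ?_
  filter_upwards [hπ'] with p hp
  by_cases ht : p.2.1 = true
  · have hπp : 0 < propLaw μO p.2.2 := hε0.trans hp
    rw [if_pos ht, Real.norm_eq_abs, abs_div, abs_of_pos hπp, inv_mul_eq_div]
    gcongr
  · rw [if_neg ht, norm_zero, inv_mul_eq_div]
    positivity

lemma pvb_term (f : ℝ → ℝ) (x : 𝒳) :
    ∫ p in {p : ℝ × Bool × 𝒳 | p.2.1 = true ∧ p.2.2 = x}, f p.1 / propLaw μO p.2.2 ∂μO
      = ((∫ p in {p : ℝ × Bool × 𝒳 | p.2.1 = true ∧ p.2.2 = x}, f p.1 ∂μO)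
            / (μO {p : ℝ × Bool × 𝒳 | p.2.1 = true ∧ p.2.2 = x}).toReal)
          * (μO {p : ℝ × Bool × 𝒳 | p.2.2 = x}).toReal := by
  have hcongr : ∫ p in {p : ℝ × Bool × 𝒳 | p.2.1 = true ∧ p.2.2 = x},
        f p.1 / propLaw μO p.2.2 ∂μO
      = ∫ p in {p : ℝ × Bool × 𝒳 | p.2.1 = true ∧ p.2.2 = x},
        f p.1 / propLaw μO x ∂μO := by
    refine setIntegral_congr_fun (pvb_measTX x) (fun p hp => ?_)
    rw [hp.2]
  rw [hcongr, integral_div]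
  rcases eq_or_ne (μO {p : ℝ × Bool × 𝒳 | p.2.1 = true ∧ p.2.2 = x}) 0 with h0 | h0
  · have hI : ∫ p in {p : ℝ × Bool × 𝒳 | p.2.1 = true ∧ p.2.2 = x}, f p.1 ∂μO = 0 := by
      rw [Measure.restrict_eq_zero.mpr h0, integral_zero_measure]
    simp [hI]
  · have hsub : {p : ℝ × Bool × 𝒳 | p.2.1 = true ∧ p.2.2 = x}
        ⊆ {p : ℝ × Bool × 𝒳 | p.2.2 = x} := fun p hp => hp.2
    have hb : μO {p : ℝ × Bool × 𝒳 | p.2.2 = x} ≠ 0 :=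
      fun h => h0 (measure_mono_null hsub h)
    have hμ1 : (0:ℝ) < (μO {p : ℝ × Bool × 𝒳 | p.2.1 = true ∧ p.2.2 = x}).toReal :=
      ENNReal.toReal_pos h0 (measure_ne_top _ _)
    have hμ0 : (0:ℝ) < (μO {p : ℝ × Bool × 𝒳 | p.2.2 = x}).toReal :=
      ENNReal.toReal_pos hb (measure_ne_top _ _)
    rw [propLaw]
    field_simp

lemma pvb_integral_g {ε : ℝ} (hε0 : 0 < ε)
    (hπ' : ∀ᵐ p ∂μO, ε < propLaw μO p.2.2) {f : ℝ → ℝ} (hf : Measurable f)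
    (hfi : Integrable (fun p : ℝ × Bool × 𝒳 => f p.1) μO) :
    ∫ p, (if p.2.1 = true then f p.1 / propLaw μO p.2.2 else 0) ∂μO
      = ∑' x : 𝒳, ((∫ p in {p : ℝ × Bool × 𝒳 | p.2.1 = true ∧ p.2.2 = x}, f p.1 ∂μO)
            / (μO {p : ℝ × Bool × 𝒳 | p.2.1 = true ∧ p.2.2 = x}).toReal)
          * (μO {p : ℝ × Bool × 𝒳 | p.2.2 = x}).toReal := by
  have hind : (fun p : ℝ × Bool × 𝒳 =>
      if p.2.1 = true then f p.1 / propLaw μO p.2.2 else 0)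
      = Set.indicator {p : ℝ × Bool × 𝒳 | p.2.1 = true}
          (fun p => f p.1 / propLaw μO p.2.2) := by
    ext p
    rw [Set.indicator_apply]
    rfl
  have hU : {p : ℝ × Bool × 𝒳 | p.2.1 = true}
      = ⋃ x : 𝒳, {p : ℝ × Bool × 𝒳 | p.2.1 = true ∧ p.2.2 = x} := by
    ext p
    simp only [Set.mem_setOf_eq, Set.mem_iUnion]
    exact ⟨fun h => ⟨p.2.2, h, rfl⟩, fun ⟨x, h, _⟩ => h⟩
  have hInt := pvb_integrable_g μO hε0 hπ' hf hfi
  rw [hind] at hInt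
  have hIO : IntegrableOn (fun p : ℝ × Bool × 𝒳 => f p.1 / propLaw μO p.2.2)
      {p : ℝ × Bool × 𝒳 | p.2.1 = true} μO :=
    (integrable_indicator_iff pvb_measT).mp hInt
  have hdisj : Pairwise (Function.onFun Disjoint
      (fun x : 𝒳 => {p : ℝ × Bool × 𝒳 | p.2.1 = true ∧ p.2.2 = x})) := by
    intro x y hxy
    refine Set.disjoint_left.mpr fun p hpx hpy => hxy ?_
    rw [← hpx.2, hpy.2]
  rw [hind, integral_indicator pvb_measT]
  rw [hU] at hIO ⊢
  rw [integral_iUnion (fun x => pvb_measTX x) hdisj hIO]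
  exact tsum_congr fun x => pvb_term μO f x

lemma pvb_tsum_X_one : ∑' x : 𝒳, (μO {p : ℝ × Bool × 𝒳 | p.2.2 = x}).toReal = 1 := by
  have hdisj : Pairwise (Function.onFun Disjoint
      (fun x : 𝒳 => {p : ℝ × Bool × 𝒳 | p.2.2 = x})) := by
    intro x y hxy
    refine Set.disjoint_left.mpr fun p hpx hpy => hxy ?_
    rw [← hpx, hpy]
  have hU : (⋃ x : 𝒳, {p : ℝ × Bool × 𝒳 | p.2.2 = x}) = Set.univ := by
    ext p
    simp only [Set.mem_iUnion, Set.mem_setOf_eq, Set.mem_univ, iff_true]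
    exact ⟨p.2.2, rfl⟩
  rw [← ENNReal.tsum_toReal_eq (fun _ => measure_ne_top _ _),
    ← measure_iUnion hdisj (fun x => pvb_measX x), hU, measure_univ, ENNReal.toReal_one]

lemma pvb_integral_g0 {ε : ℝ} (hε0 : 0 < ε)
    (hπ' : ∀ᵐ p ∂μO, ε < propLaw μO p.2.2) :
    ∫ p, (if p.2.1 = true then 1 / propLaw μO p.2.2 else 0) ∂μO = 1 := by
  rw [pvb_integral_g μO hε0 hπ' measurable_const (integrable_const 1)]
  have hterm : ∀ x : 𝒳,
      ((∫ _ in {p : ℝ × Bool × 𝒳 | p.2.1 = true ∧ p.2.2 = x}, (1:ℝ) ∂μO)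
            / (μO {p : ℝ × Bool × 𝒳 | p.2.1 = true ∧ p.2.2 = x}).toReal)
          * (μO {p : ℝ × Bool × 𝒳 | p.2.2 = x}).toReal
        = (μO {p : ℝ × Bool × 𝒳 | p.2.2 = x}).toReal := by
    intro x
    rcases eq_or_ne (μO {p : ℝ × Bool × 𝒳 | p.2.2 = x}) 0 with h0 | h0
    · have h1 : μO {p : ℝ × Bool × 𝒳 | p.2.1 = true ∧ p.2.2 = x} = 0 :=
        measure_mono_null (fun p hp => hp.2) h0
      simp [h0, h1]
    · have hπx : ε < propLaw μO x := pvb_prop_pos μO hπ' x h0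
      have hπpos : 0 < propLaw μO x := hε0.trans hπx
      have h1 : (μO {p : ℝ × Bool × 𝒳 | p.2.1 = true ∧ p.2.2 = x}).toReal ≠ 0 := by
        intro h
        rw [propLaw, h, zero_div] at hπpos
        exact lt_irrefl 0 hπpos
      rw [setIntegral_const, smul_eq_mul, mul_one, measureReal_def, div_self h1, one_mul]
  rw [tsum_congr hterm, pvb_tsum_X_one]

end PVBAux

set_option maxHeartbeats 1000000 in
theorem posterior_variance_bracket_convergence
    {Ω : Type*} [MeasurableSpace Ω]
    {𝒳 : Type*} [Countable 𝒳] [MeasurableSpace 𝒳] [MeasurableSingletonClass 𝒳]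
    (P : Measure Ω) [IsProbabilityMeasure P]
    (Z : ℕ → Ω → ℝ × Bool × 𝒳)
    (hZmeas : ∀ i, Measurable (Z i))
    -- independence
    (hindep : ProbabilityTheory.iIndepFun Z P)
    -- identical distribution with common law `μO`
    (μO : Measure (ℝ × Bool × 𝒳)) [IsProbabilityMeasure μO]
    (hlaw : ∀ i, Measure.map (Z i) P = μO)
    (ε : ℝ) (hε : 0 < ε ∧ ε < 1 / 2)
    -- `ε < π(X) < 1 − ε` almost surely
    (hπ : ∀ᵐ p ∂μO, ε < propLaw μO p.2.2 ∧ propLaw μO p.2.2 < 1 - ε)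
    -- `E[Y⁴] < ∞`
    (hY4 : Integrable (fun p : ℝ × Bool × 𝒳 => p.1 ^ 4) μO)
    (μ0 m2 : ℝ)
    -- `μ₀ = ∑_x E[Y | T=1, X=x] P_O(X=x)`
    (hμ0 : μ0 = ∑' x : 𝒳,
      ((∫ p in {p : ℝ × Bool × 𝒳 | p.2.1 = true ∧ p.2.2 = x}, p.1 ∂μO)
          / (μO {p : ℝ × Bool × 𝒳 | p.2.1 = true ∧ p.2.2 = x}).toReal)
        * (μO {p : ℝ × Bool × 𝒳 | p.2.2 = x}).toReal)
    -- `m₂ = ∑_x E[Y² | T=1, X=x] P_O(X=x)`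
    (hm2 : m2 = ∑' x : 𝒳,
      ((∫ p in {p : ℝ × Bool × 𝒳 | p.2.1 = true ∧ p.2.2 = x}, p.1 ^ 2 ∂μO)
          / (μO {p : ℝ × Bool × 𝒳 | p.2.1 = true ∧ p.2.2 = x}).toReal)
        * (μO {p : ℝ × Bool × 𝒳 | p.2.2 = x}).toReal) :
    MeasureTheory.TendstoInMeasure P
      (fun (n : ℕ) ω =>
        (∑ i ∈ Finset.range n,
            (if (Z i ω).2.1 = true then (Z i ω).1 ^ 2 / propLaw μO (Z i ω).2.2 else 0))
          / (∑ j ∈ Finset.range n,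
              (if (Z j ω).2.1 = true then 1 / propLaw μO (Z j ω).2.2 else 0))
        - ((∑ i ∈ Finset.range n,
              (if (Z i ω).2.1 = true then (Z i ω).1 / propLaw μO (Z i ω).2.2 else 0))
            / ∑ j ∈ Finset.range n,
              (if (Z j ω).2.1 = true then 1 / propLaw μO (Z j ω).2.2 else 0)) ^ 2)
      Filter.atTop (fun _ => m2 - μ0 ^ 2) := by
  classical
  obtain ⟨hε0, _⟩ := hε
  have hπ' : ∀ᵐ p ∂μO, ε < propLaw μO p.2.2 := hπ.mono fun p h => h.1
  -- measurability of the base functions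
  have hfm2 : Measurable (fun y : ℝ => y ^ 2) := measurable_id.pow_const 2
  have hfm1 : Measurable (fun y : ℝ => y) := measurable_id
  have hfm0 : Measurable (fun _ : ℝ => (1:ℝ)) := measurable_const
  -- integrability of the base functions
  have hb : Integrable (fun p : ℝ × Bool × 𝒳 => (1:ℝ) + p.1 ^ 4) μO :=
    (integrable_const 1).add hY4
  have hIy2 : Integrable (fun p : ℝ × Bool × 𝒳 => p.1 ^ 2) μO :=
    hb.mono' ((measurable_fst.pow_const 2)).aestronglyMeasurable
      (Filter.Eventually.of_forall fun p => pvb_sq_le_one_add_pow4 p.1)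
  have hIy : Integrable (fun p : ℝ × Bool × 𝒳 => p.1) μO :=
    hb.mono' measurable_fst.aestronglyMeasurable
      (Filter.Eventually.of_forall fun p => pvb_abs_le_one_add_pow4 p.1)
  have hIy0 : Integrable (fun p : ℝ × Bool × 𝒳 => (1:ℝ)) μO := integrable_const 1
  -- the weighted summands
  have hg2 := pvb_measg μO (f := fun y => y ^ 2) hfm2
  have hg1 := pvb_measg μO (f := fun y => y) hfm1
  have hg0 := pvb_measg μO (f := fun _ => (1:ℝ)) hfm0
  have hInt2 := pvb_integrable_g μO hε0 hπ' hfm2 hIy2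
  have hInt1 := pvb_integrable_g μO hε0 hπ' hfm1 hIy
  have hInt0 := pvb_integrable_g μO hε0 hπ' hfm0 hIy0
  -- values of the expectations
  have hV2 : ∫ p, (if p.2.1 = true then p.1 ^ 2 / propLaw μO p.2.2 else 0) ∂μO = m2 := by
    rw [pvb_integral_g μO hε0 hπ' hfm2 hIy2]; exact hm2.symm
  have hV1 : ∫ p, (if p.2.1 = true then p.1 / propLaw μO p.2.2 else 0) ∂μO = μ0 := by
    rw [pvb_integral_g μO hε0 hπ' hfm1 hIy]; exact hμ0.symm
  have hV0 : ∫ p, (if p.2.1 = true then 1 / propLaw μO p.2.2 else 0) ∂μO = 1 :=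
    pvb_integral_g0 μO hε0 hπ'
  -- strong laws of large numbers
  have hS2 := pvb_slln P Z hZmeas hindep μO hlaw hg2 hInt2
  have hS1 := pvb_slln P Z hZmeas hindep μO hlaw hg1 hInt1
  have hS0 := pvb_slln P Z hZmeas hindep μO hlaw hg0 hInt0
  rw [hV2] at hS2
  rw [hV1] at hS1
  rw [hV0] at hS0
  -- a.e. convergence of the bracket
  have hae : ∀ᵐ ω ∂P, Filter.Tendsto
      (fun n : ℕ =>
        (∑ i ∈ Finset.range n,
            (if (Z i ω).2.1 = true then (Z i ω).1 ^ 2 / propLaw μO (Z i ω).2.2 else 0))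
          / (∑ j ∈ Finset.range n,
              (if (Z j ω).2.1 = true then 1 / propLaw μO (Z j ω).2.2 else 0))
        - ((∑ i ∈ Finset.range n,
              (if (Z i ω).2.1 = true then (Z i ω).1 / propLaw μO (Z i ω).2.2 else 0))
            / ∑ j ∈ Finset.range n,
              (if (Z j ω).2.1 = true then 1 / propLaw μO (Z j ω).2.2 else 0)) ^ 2)
      Filter.atTop (nhds (m2 - μ0 ^ 2)) := by
    filter_upwards [hS2, hS1, hS0] with ω t2 t1 t0
    have key := (t2.div t0 one_ne_zero).sub ((t1.div t0 one_ne_zero).pow 2)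
    simp only [div_one] at key
    refine Filter.Tendsto.congr' ?_ key
    filter_upwards [Filter.eventually_ge_atTop 1] with n hn
    have hn' : (n : ℝ) ≠ 0 := Nat.cast_ne_zero.mpr (by omega)
    simp only [Pi.div_apply]
    rw [pvb_div_div _ _ _ hn', pvb_div_div _ _ _ hn']
  refine tendstoInMeasure_of_tendsto_ae (fun n => ?_) hae
  have hs2 : Measurable (fun ω => ∑ i ∈ Finset.range n,
      (if (Z i ω).2.1 = true then (Z i ω).1 ^ 2 / propLaw μO (Z i ω).2.2 else 0)) :=
    Finset.measurable_sum _ (fun i _ => hg2.comp (hZmeas i))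
  have hs1 : Measurable (fun ω => ∑ i ∈ Finset.range n,
      (if (Z i ω).2.1 = true then (Z i ω).1 / propLaw μO (Z i ω).2.2 else 0)) :=
    Finset.measurable_sum _ (fun i _ => hg1.comp (hZmeas i))
  have hs0 : Measurable (fun ω => ∑ j ∈ Finset.range n,
      (if (Z j ω).2.1 = true then 1 / propLaw μO (Z j ω).2.2 else 0)) :=
    Finset.measurable_sum _ (fun i _ => hg0.comp (hZmeas i))
  exact ((hs2.div hs0).sub ((hs1.div hs0).pow_const 2)).aestronglyMeasurable


end
end
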